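/- arXiv:0903.4284 — 13 statements merged into one kernel-verified Lean document; each statement's English description precedes it below -/
import Mathlib

section
/- (Weighted Wirtinger inequality.) For every h ∈ E, F(h) = ∫₀^{π/2} (h(t)² − (1/2) h'(t)²) cos t dt ≤ 0. -/
open Real MeasureTheory Set Filter Topology

/-- `h` belongs to the class `E` of functions of class `C^{1,1}` on `[0, π/2]`
(continuously differentiable with Lipschitz continuous derivative) satisfying
`h 0 = 0` and `h' (π/2) = 0`; the function `h'` is the derivative of `h` on `[0, π/2]`. -/
structure MemE (h h' : ℝ → ℝ) : Prop where
  hasDeriv : ∀ t ∈ Icc (0:ℝ) (π/2), HasDerivWithinAt h (h' t) (Icc (0:ℝ) (π/2)) t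
  lipschitz : ∃ K : NNReal, LipschitzOnWith K h' (Icc (0:ℝ) (π/2))
  h_zero : h 0 = 0
  h'_pi_div_two : h' (π/2) = 0

/-- Weighted Wirtinger inequality: for every `h ∈ E`,
`F(h) = ∫₀^{π/2} (h² − (1/2) h'²) cos t dt ≤ 0`. -/
theorem weighted_wirtinger_inequality (h h' : ℝ → ℝ) (hE : MemE h h') :
    ∫ t in (0:ℝ)..(π/2), (h t ^ 2 - (1/2) * h' t ^ 2) * Real.cos t ≤ 0 := by
  obtain ⟨hderiv, ⟨K, hlip⟩, h0, -⟩ := hE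
  have hπ : (0:ℝ) < π/2 := by positivity
  set X : ℝ → ℝ := fun t => (h t ^ 2 - (1/2) * h' t ^ 2) * Real.cos t with hXdef
  -- continuity facts
  have hconth : ContinuousOn h (Icc 0 (π/2)) := fun t ht => (hderiv t ht).continuousWithinAt
  have hconth' : ContinuousOn h' (Icc 0 (π/2)) := hlip.continuousOn
  have hcontX : ContinuousOn X (Icc 0 (π/2)) := by
    apply ContinuousOn.mul
    · exact ((hconth.pow 2).sub (continuousOn_const.mul (hconth'.pow 2)))
    · exact Real.continuous_cos.continuousOn
  have hXint : ∀ u v : ℝ, u ∈ Icc (0:ℝ) (π/2) → v ∈ Icc (0:ℝ) (π/2) →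
      IntervalIntegrable X volume u v := by
    intro u v hu hv
    apply (hcontX.mono ?_).intervalIntegrable
    intro x hx
    rcases le_total u v with huv | huv
    · rw [uIcc_of_le huv] at hx; exact ⟨le_trans hu.1 hx.1, le_trans hx.2 hv.2⟩
    · rw [uIcc_of_ge huv] at hx; exact ⟨le_trans hv.1 hx.1, le_trans hx.2 hu.2⟩
  -- bound on h'
  obtain ⟨C, hC⟩ := isCompact_Icc.exists_bound_of_continuousOn hconth'
  have hCnn : 0 ≤ C := le_trans (norm_nonneg _) (hC 0 ⟨le_rfl, hπ.le⟩)
  -- linear bound on h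
  have hhb : ∀ ε ∈ Icc (0:ℝ) (π/2), |h ε| ≤ C * ε := by
    intro ε hε
    have := (convex_Icc (0:ℝ) (π/2)).norm_image_sub_le_of_norm_hasDerivWithin_le
      hderiv hC ⟨le_rfl, hπ.le⟩ hε
    simpa [h0, Real.norm_eq_abs, abs_of_nonneg hε.1] using this
  -- the key estimate on [ε, π/2]
  have key : ∀ ε ∈ Ioc (0:ℝ) (π/2),
      ∫ t in ε..(π/2), X t ≤ (1/2) * h ε ^ 2 * Real.cos ε ^ 2 / Real.sin ε := by
    intro ε hε
    set G : ℝ → ℝ := fun t => -(1/2) * (h t ^ 2 * Real.cos t ^ 2) / Real.sin t with hGdef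
    set ψ : ℝ → ℝ := fun t => X t + (1/2) * ((h' t - h t * Real.cos t / Real.sin t) ^ 2 * Real.cos t) with hψdef
    have hsinpos : ∀ t ∈ Icc ε (π/2), 0 < Real.sin t := by
      intro t ht
      exact Real.sin_pos_of_pos_of_lt_pi (lt_of_lt_of_le hε.1 ht.1)
        (lt_of_le_of_lt ht.2 (by linarith [Real.pi_pos]))
    have hsub : Icc ε (π/2) ⊆ Icc 0 (π/2) := Icc_subset_Icc hε.1.le le_rfl
    -- derivative of G at interior points
    have hGderiv : ∀ t ∈ Ioo ε (π/2), HasDerivAt G (ψ t) t := by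
      intro t ht
      have ht' : t ∈ Ioo (0:ℝ) (π/2) := ⟨lt_trans hε.1 ht.1, ht.2⟩
      have hsin : Real.sin t ≠ 0 :=
        (hsinpos t ⟨ht.1.le, ht.2.le⟩).ne'
      have hh : HasDerivAt h (h' t) t :=
        (hderiv t ⟨ht'.1.le, ht'.2.le⟩).hasDerivAt (Icc_mem_nhds ht'.1 ht'.2)
      have hnum : HasDerivAt (fun t => h t ^ 2 * Real.cos t ^ 2)
          ((2 * h t * h' t) * Real.cos t ^ 2 + h t ^ 2 * (2 * Real.cos t * (-Real.sin t))) t := by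
        have h1 : HasDerivAt (fun t => h t ^ 2) (2 * h t * h' t) t := by
          simpa [mul_comm, mul_assoc, mul_left_comm] using hh.fun_pow 2
        have h2 : HasDerivAt (fun t => Real.cos t ^ 2) (2 * Real.cos t * (-Real.sin t)) t := by
          simpa [mul_comm, mul_assoc, mul_left_comm] using (Real.hasDerivAt_cos t).fun_pow 2
        exact h1.mul h2
      have hdiv : HasDerivAt (fun t => h t ^ 2 * Real.cos t ^ 2 / Real.sin t)
          ((((2 * h t * h' t) * Real.cos t ^ 2 + h t ^ 2 * (2 * Real.cos t * (-Real.sin t)))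
            * Real.sin t - h t ^ 2 * Real.cos t ^ 2 * Real.cos t) / Real.sin t ^ 2) t :=
        hnum.div (Real.hasDerivAt_sin t) hsin
      have : HasDerivAt (fun y => -(1/2) * (h y ^ 2 * Real.cos y ^ 2 / Real.sin y)) _ t :=
        hdiv.const_mul (-(1/2) : ℝ)
      convert this using 1
      · ext x; simp [hGdef]; ring
      · simp only [hψdef, hXdef]
        field_simp
        ring
    have hcontG : ContinuousOn G (Icc ε (π/2)) := by
      apply ContinuousOn.div
      · exact continuousOn_const.mul (((hconth.mono hsub).pow 2).mul
          ((Real.continuous_cos.continuousOn).pow 2))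
      · exact Real.continuous_sin.continuousOn
      · exact fun t ht => (hsinpos t ht).ne'
    have hcontψ : ContinuousOn ψ (Icc ε (π/2)) := by
      apply (hcontX.mono hsub).add
      apply continuousOn_const.mul
      apply ContinuousOn.mul _ Real.continuous_cos.continuousOn
      apply ContinuousOn.pow
      apply (hconth'.mono hsub).sub
      apply ContinuousOn.div ((hconth.mono hsub).mul Real.continuous_cos.continuousOn)
        Real.continuous_sin.continuousOn (fun t ht => (hsinpos t ht).ne')
    have hψint : IntervalIntegrable ψ volume ε (π/2) := by
      have h2 := hcontψ
      rw [← uIcc_of_le hε.2] at h2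
      exact h2.intervalIntegrable
    have hftc : ∫ t in ε..(π/2), ψ t = G (π/2) - G ε :=
      intervalIntegral.integral_eq_sub_of_hasDerivAt_of_le hε.2 hcontG hGderiv hψint
    have hGpi : G (π/2) = 0 := by simp [hGdef, Real.cos_pi_div_two]
    have hsqint : IntervalIntegrable
        (fun t => (1/2) * ((h' t - h t * Real.cos t / Real.sin t) ^ 2 * Real.cos t))
        volume ε (π/2) := by
      apply ContinuousOn.intervalIntegrable
      rw [uIcc_of_le hε.2]
      exact continuousOn_const.mul (ContinuousOn.mul (ContinuousOn.pow
        ((hconth'.mono hsub).sub (ContinuousOn.div ((hconth.mono hsub).mul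
          Real.continuous_cos.continuousOn) Real.continuous_sin.continuousOn
          (fun t ht => (hsinpos t ht).ne'))) 2) Real.continuous_cos.continuousOn)
    have hXint' : IntervalIntegrable X volume ε (π/2) :=
      hXint ε (π/2) ⟨hε.1.le, hε.2⟩ ⟨hπ.le, le_rfl⟩
    have hsplit : ∫ t in ε..(π/2), ψ t = (∫ t in ε..(π/2), X t) +
        ∫ t in ε..(π/2), (1/2) * ((h' t - h t * Real.cos t / Real.sin t) ^ 2 * Real.cos t) :=
      intervalIntegral.integral_add hXint' hsqint
    have hsqnn : 0 ≤ ∫ t in ε..(π/2),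
        (1/2) * ((h' t - h t * Real.cos t / Real.sin t) ^ 2 * Real.cos t) := by
      apply intervalIntegral.integral_nonneg hε.2
      intro t ht
      have hcos : 0 ≤ Real.cos t := Real.cos_nonneg_of_mem_Icc
        ⟨by linarith [hε.1, ht.1, Real.pi_pos], ht.2⟩
      positivity
    have : ∫ t in ε..(π/2), X t ≤ G (π/2) - G ε := by
      rw [← hftc, hsplit]; linarith
    rw [hGpi] at this
    calc ∫ t in ε..(π/2), X t ≤ 0 - G ε := this
      _ = (1/2) * h ε ^ 2 * Real.cos ε ^ 2 / Real.sin ε := by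
          simp [hGdef]; ring
  -- pass to the limit ε → 0⁺
  have hmem : Ioc (0:ℝ) (π/2) ∈ 𝓝[>] (0:ℝ) := Ioc_mem_nhdsGT_of_mem ⟨le_rfl, hπ⟩
  have hineq : ∀ᶠ ε in 𝓝[>] (0:ℝ),
      (∫ t in (0:ℝ)..(π/2), X t) ≤ (∫ t in (0:ℝ)..ε, X t) +
        (1/2) * h ε ^ 2 * Real.cos ε ^ 2 / Real.sin ε := by
    filter_upwards [hmem] with ε hε
    have hsplit : (∫ t in (0:ℝ)..ε, X t) + ∫ t in ε..(π/2), X t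
        = ∫ t in (0:ℝ)..(π/2), X t :=
      intervalIntegral.integral_add_adjacent_intervals
        (hXint 0 ε ⟨le_rfl, hπ.le⟩ ⟨hε.1.le, hε.2⟩)
        (hXint ε (π/2) ⟨hε.1.le, hε.2⟩ ⟨hπ.le, le_rfl⟩)
    have := key ε hε
    linarith
  -- the first term tends to 0
  have hlim1 : Tendsto (fun ε => ∫ t in (0:ℝ)..ε, X t) (𝓝[>] (0:ℝ)) (𝓝 0) := by
    have hIO : IntegrableOn X (uIcc (0:ℝ) (π/2)) volume := by
      rw [uIcc_of_le hπ.le]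
      exact hcontX.integrableOn_compact isCompact_Icc
    have hcont := intervalIntegral.continuousOn_primitive_interval hIO
    have h0' : (0:ℝ) ∈ uIcc (0:ℝ) (π/2) := left_mem_uIcc
    have := (hcont 0 h0').tendsto
    rw [intervalIntegral.integral_same] at this
    apply this.mono_left
    rw [uIcc_of_le hπ.le, ← nhdsWithin_Ioc_eq_nhdsGT hπ]
    exact nhdsWithin_mono 0 Ioc_subset_Icc_self
  -- the second term tends to 0
  have hlim2 : Tendsto (fun ε => (1/2) * h ε ^ 2 * Real.cos ε ^ 2 / Real.sin ε)
      (𝓝[>] (0:ℝ)) (𝓝 0) := by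
    apply squeeze_zero' (g := fun ε => (π/4) * C^2 * ε)
    · filter_upwards [hmem] with ε hε
      have hsin : 0 < Real.sin ε := Real.sin_pos_of_pos_of_lt_pi hε.1
        (lt_of_le_of_lt hε.2 (by linarith [Real.pi_pos]))
      apply div_nonneg _ hsin.le
      positivity
    · filter_upwards [hmem] with ε hε
      have hsin : (2/π) * ε ≤ Real.sin ε := Real.mul_le_sin hε.1.le hε.2
      have hsin0 : 0 < (2/π) * ε :=
        mul_pos (div_pos two_pos Real.pi_pos) hε.1
      have hb : h ε ^ 2 ≤ (C * ε) ^ 2 := by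
        have := hhb ε ⟨hε.1.le, hε.2⟩
        nlinarith [abs_nonneg (h ε), sq_abs (h ε)]
      have hcos : Real.cos ε ^ 2 ≤ 1 := by
        nlinarith [Real.sin_sq_add_cos_sq ε, sq_nonneg (Real.sin ε)]
      calc (1/2) * h ε ^ 2 * Real.cos ε ^ 2 / Real.sin ε
          ≤ (1/2) * (C * ε)^2 * 1 / ((2/π) * ε) := by
            apply div_le_div₀ (by positivity) ?_ hsin0 hsin
            have h2 : 0 ≤ h ε ^ 2 := sq_nonneg _
            nlinarith [sq_nonneg (Real.cos ε), sq_nonneg (C * ε)]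
        _ = (π/4) * C^2 * ε := by
            have hε0 : ε ≠ 0 := hε.1.ne'
            have hπ0 : π ≠ 0 := Real.pi_pos.ne'
            field_simp
            ring
    · have : Tendsto (fun ε : ℝ => (π/4) * C^2 * ε) (𝓝 0) (𝓝 ((π/4) * C^2 * 0)) :=
        (continuous_const.mul continuous_id).tendsto 0
      simpa using this.mono_left nhdsWithin_le_nhds
  have hlim : Tendsto (fun ε => (∫ t in (0:ℝ)..ε, X t) +
      (1/2) * h ε ^ 2 * Real.cos ε ^ 2 / Real.sin ε) (𝓝[>] (0:ℝ)) (𝓝 0) := by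
    simpa using hlim1.add hlim2
  exact ge_of_tendsto hlim hineq
end

section
/- (Equality case of the weighted Wirtinger inequality.) If h ∈ E and ∫₀^{π/2} (h(t)² − (1/2) h'(t)²) cos t dt = 0, then there exists a real constant c such that h(t) = c sin t for all t ∈ [0, π/2]. -/
open Real MeasureTheory Set

set_option maxHeartbeats 1000000 in
/-- Equality case of the weighted Wirtinger inequality: if `h ∈ E` and
`∫₀^{π/2} (h² − (1/2) h'²) cos t dt = 0`, then `h t = c sin t` on `[0, π/2]`
for some real constant `c`. -/
theorem weighted_wirtinger_equality (h h' : ℝ → ℝ) (hE : MemE h h')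
    (hF : ∫ t in (0:ℝ)..(π/2), (h t ^ 2 - (1/2) * h' t ^ 2) * Real.cos t = 0) :
    ∃ c : ℝ, ∀ t ∈ Icc (0:ℝ) (π/2), h t = c * Real.sin t := by
  obtain ⟨hasD, ⟨K₀, hlip⟩, h0, h'pi⟩ := hE
  have hπ : (0:ℝ) < π := pi_pos
  have hpi : (0:ℝ) < π/2 := by positivity
  have hch : ContinuousOn h (Icc (0:ℝ) (π/2)) := fun t ht => (hasD t ht).continuousWithinAt
  have hch' : ContinuousOn h' (Icc (0:ℝ) (π/2)) := hlip.continuousOn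
  -- a bound for h'
  obtain ⟨K, hK⟩ : ∃ K, ∀ t ∈ Icc (0:ℝ) (π/2), |h' t| ≤ K := by
    obtain ⟨K, hK⟩ := (isCompact_Icc).exists_bound_of_continuousOn hch'
    exact ⟨K, fun t ht => by simpa [Real.norm_eq_abs] using hK t ht⟩
  have hK0 : 0 ≤ K := le_trans (abs_nonneg _) (hK (π/2) ⟨hpi.le, le_refl _⟩)
  -- linear bound for h
  have hht : ∀ t ∈ Icc (0:ℝ) (π/2), |h t| ≤ K * t := by
    intro t ht
    have := (convex_Icc (0:ℝ) (π/2)).norm_image_sub_le_of_norm_hasDerivWithin_le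
      hasD (fun x hx => by simpa [Real.norm_eq_abs] using hK x hx)
      ⟨le_refl (0:ℝ), hpi.le⟩ ht
    simpa [h0, Real.norm_eq_abs, abs_of_nonneg ht.1] using this
  -- sin bounds
  have hsinpos : ∀ t ∈ Ioc (0:ℝ) (π/2), 0 < Real.sin t := fun t ht =>
    Real.sin_pos_of_pos_of_lt_pi ht.1 (lt_of_le_of_lt ht.2 (by linarith))
  have htsin : ∀ t ∈ Ioc (0:ℝ) (π/2), t ≤ π/2 * Real.sin t := by
    intro t ht
    have h2 : 2/π * t ≤ Real.sin t := Real.mul_le_sin ht.1.le ht.2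
    calc t = π/2 * (2/π * t) := by field_simp
    _ ≤ π/2 * Real.sin t := mul_le_mul_of_nonneg_left h2 (by positivity)
  set F : ℝ → ℝ := fun t => h t ^ 2 * Real.cos t ^ 2 / (2 * Real.sin t) with hFdef
  set f : ℝ → ℝ := fun t => h t * h' t * Real.cos t ^ 2 / Real.sin t - h t ^ 2 * Real.cos t
      - h t ^ 2 * Real.cos t ^ 3 / (2 * Real.sin t ^ 2) with hfdef
  set g : ℝ → ℝ := fun t =>
      (h' t * Real.sin t - h t * Real.cos t) ^ 2 * Real.cos t / (2 * Real.sin t ^ 2) with hgdef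
  -- derivative of h at interior points
  have hhD : ∀ x ∈ Ioo (0:ℝ) (π/2), HasDerivAt h (h' x) x := by
    intro x hx
    exact (hasD x ⟨hx.1.le, hx.2.le⟩).hasDerivAt (Icc_mem_nhds hx.1 hx.2)
  -- derivative of F
  have hFderiv : ∀ x ∈ Ioo (0:ℝ) (π/2), HasDerivAt F (f x) x := by
    intro x hx
    have hs0 : Real.sin x ≠ 0 := (hsinpos x ⟨hx.1, hx.2.le⟩).ne'
    have hs0' : 2 * Real.sin x ≠ 0 := by
      simpa using hs0
    have H := (((hhD x hx).pow 2).mul ((Real.hasDerivAt_cos x).pow 2)).div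
      ((Real.hasDerivAt_sin x).const_mul (2:ℝ)) hs0'
    have H' : HasDerivAt F _ x := H
    convert H' using 1
    simp only [hfdef, Pi.pow_apply, Pi.mul_apply]
    field_simp
    ring
  -- bound on F
  have hFbound : ∀ t ∈ Icc (0:ℝ) (π/2), |F t| ≤ K^2 * π * t := by
    intro t ht
    rcases eq_or_lt_of_le ht.1 with h0t | h0t
    · rw [← h0t]; simp [hFdef, h0]
    · have htI : t ∈ Ioc (0:ℝ) (π/2) := ⟨h0t, ht.2⟩
      have hs := hsinpos t htI
      have hts := htsin t htI
      have hhtb := hht t ht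
      have hFt : F t = h t ^ 2 * Real.cos t ^ 2 / (2 * Real.sin t) := rfl
      rw [hFt, abs_div, abs_of_pos (by positivity : (0:ℝ) < 2 * Real.sin t),
        div_le_iff₀ (by positivity)]
      have h2 : h t ^ 2 ≤ (K*t)^2 := by
        rw [← sq_abs]
        exact pow_le_pow_left₀ (abs_nonneg _) hhtb 2
      have h3 : Real.cos t ^ 2 ≤ 1 := Real.cos_sq_le_one t
      have habs : |h t ^ 2 * Real.cos t ^ 2| = h t ^ 2 * Real.cos t ^ 2 :=
        abs_of_nonneg (by positivity)
      rw [habs]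
      nlinarith [sq_nonneg (h t), sq_nonneg K, mul_nonneg (sq_nonneg K) h0t.le,
        mul_le_mul_of_nonneg_left hts (mul_nonneg (sq_nonneg K) h0t.le)]
  -- continuity of F on the closed interval
  have hFcont : ContinuousOn F (Icc (0:ℝ) (π/2)) := by
    intro t ht
    rcases eq_or_lt_of_le ht.1 with h0t | h0t
    · have hF0 : F 0 = 0 := by simp [hFdef, h0]
      rw [← h0t]
      have hb : ∀ᶠ x in nhdsWithin (0:ℝ) (Icc (0:ℝ) (π/2)), ‖F x‖ ≤ K^2 * π * x := by
        filter_upwards [self_mem_nhdsWithin] with x hx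
        simpa [Real.norm_eq_abs] using hFbound x hx
      have hco : Continuous (fun x : ℝ => K^2 * π * x) := by continuity
      have hg0 : Filter.Tendsto (fun x : ℝ => K^2 * π * x)
          (nhdsWithin (0:ℝ) (Icc (0:ℝ) (π/2))) (nhds 0) := by
        have := hco.tendsto 0
        simp only [mul_zero] at this
        exact this.mono_left nhdsWithin_le_nhds
      have : Filter.Tendsto F (nhdsWithin (0:ℝ) (Icc (0:ℝ) (π/2))) (nhds 0) :=
        squeeze_zero_norm' hb hg0
      rw [ContinuousWithinAt, hF0]
      exact this
    · have hs0 : Real.sin t ≠ 0 := (hsinpos t ⟨h0t, ht.2⟩).ne'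
      apply ContinuousWithinAt.div
      · exact ((hch t ht).pow 2).mul
          ((Real.continuous_cos.continuousAt.continuousWithinAt).pow 2)
      · exact continuousWithinAt_const.mul Real.continuous_sin.continuousAt.continuousWithinAt
      · simpa using hs0
  -- integrability of f
  have hfmeas : ContinuousOn f (Ioc (0:ℝ) (π/2)) := by
    have h1 : ContinuousOn h (Ioc (0:ℝ) (π/2)) := hch.mono Ioc_subset_Icc_self
    have h2 : ContinuousOn h' (Ioc (0:ℝ) (π/2)) := hch'.mono Ioc_subset_Icc_self
    have hsne : ∀ x ∈ Ioc (0:ℝ) (π/2), Real.sin x ≠ 0 := fun x hx => (hsinpos x hx).ne'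
    apply ContinuousOn.sub
    apply ContinuousOn.sub
    · exact ((h1.mul h2).mul (Real.continuous_cos.continuousOn.pow 2)).div
        Real.continuous_sin.continuousOn hsne
    · exact (h1.pow 2).mul Real.continuous_cos.continuousOn
    · refine ((h1.pow 2).mul (Real.continuous_cos.continuousOn.pow 3)).div
        (continuousOn_const.mul (Real.continuous_sin.continuousOn.pow 2)) ?_
      intro x hx
      have := hsinpos x hx
      positivity
  have hfbound : ∀ t ∈ Ioc (0:ℝ) (π/2), ‖f t‖ ≤ K^2*π + K^2*π^2 + K^2*π^2 := by
    intro t ht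
    have hs := hsinpos t ht
    have hts := htsin t ht
    have hhtb := hht t ⟨ht.1.le, ht.2⟩
    have hh'b := hK t ⟨ht.1.le, ht.2⟩
    have hcos := Real.abs_cos_le_one t
    rw [Real.norm_eq_abs]
    have e1 : |h t * h' t * Real.cos t ^ 2 / Real.sin t| ≤ K^2 * π := by
      rw [abs_div, abs_of_pos hs, div_le_iff₀ hs]
      have hnum : |h t * h' t * Real.cos t ^ 2| ≤ K * t * K := by
        rw [abs_mul]
        calc |h t * h' t| * |Real.cos t ^ 2| ≤ (K * t * K) * 1 := by
              apply mul_le_mul ?_ ?_ (abs_nonneg _)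
                (mul_nonneg (mul_nonneg hK0 ht.1.le) hK0)
              · rw [abs_mul]
                exact mul_le_mul hhtb hh'b (abs_nonneg _) (mul_nonneg hK0 ht.1.le)
              · rw [abs_pow]
                exact pow_le_one₀ (abs_nonneg _) hcos
        _ = K * t * K := mul_one _
      have hKts : K^2 * t ≤ K^2 * (π/2 * Real.sin t) :=
        mul_le_mul_of_nonneg_left hts (sq_nonneg K)
      nlinarith [mul_nonneg (mul_nonneg (sq_nonneg K) hs.le) hπ.le]
    have e2 : |h t ^ 2 * Real.cos t| ≤ K^2 * π^2 := by
      rw [abs_mul, abs_pow]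
      calc |h t| ^ 2 * |Real.cos t| ≤ (K*t)^2 * 1 := by
            apply mul_le_mul ?_ hcos (abs_nonneg _) (sq_nonneg _)
            exact pow_le_pow_left₀ (abs_nonneg _) hhtb 2
      _ ≤ K^2 * π^2 := by nlinarith [sq_nonneg K, mul_self_le_mul_self ht.1.le ht.2]
    have e3 : |h t ^ 2 * Real.cos t ^ 3 / (2 * Real.sin t ^ 2)| ≤ K^2 * π^2 := by
      rw [abs_div, abs_of_pos (by positivity : (0:ℝ) < 2 * Real.sin t ^ 2),
        div_le_iff₀ (by positivity)]
      have hnum : |h t ^ 2 * Real.cos t ^ 3| ≤ (K*t)^2 := by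
        rw [abs_mul, abs_pow, abs_pow]
        calc |h t| ^ 2 * |Real.cos t| ^ 3 ≤ (K*t)^2 * 1 := by
              apply mul_le_mul ?_ ?_ (by positivity) (sq_nonneg _)
              · exact pow_le_pow_left₀ (abs_nonneg _) hhtb 2
              · exact pow_le_one₀ (abs_nonneg _) hcos
        _ = (K*t)^2 := mul_one _
      have htt : t * t ≤ (π/2 * Real.sin t) * (π/2 * Real.sin t) :=
        mul_self_le_mul_self ht.1.le hts
      nlinarith [sq_nonneg K, mul_nonneg (sq_nonneg K) (sq_nonneg (Real.sin t)),
        mul_le_mul_of_nonneg_left htt (sq_nonneg K)]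
    calc |f t| ≤ |h t * h' t * Real.cos t ^ 2 / Real.sin t - h t ^ 2 * Real.cos t|
        + |h t ^ 2 * Real.cos t ^ 3 / (2 * Real.sin t ^ 2)| := abs_sub _ _
    _ ≤ (|h t * h' t * Real.cos t ^ 2 / Real.sin t| + |h t ^ 2 * Real.cos t|)
        + |h t ^ 2 * Real.cos t ^ 3 / (2 * Real.sin t ^ 2)| :=
          add_le_add (abs_sub _ _) le_rfl
    _ ≤ K^2*π + K^2*π^2 + K^2*π^2 := by
          exact add_le_add (add_le_add e1 e2) e3
  have hfint : IntervalIntegrable f volume 0 (π/2) := by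
    rw [intervalIntegrable_iff_integrableOn_Ioc_of_le hpi.le]
    apply Integrable.mono' (g := fun _ => K^2*π + K^2*π^2 + K^2*π^2)
      (integrableOn_const measure_Ioc_lt_top.ne)
      (hfmeas.aestronglyMeasurable measurableSet_Ioc)
    exact (ae_restrict_iff' measurableSet_Ioc).2 (ae_of_all _ hfbound)
  -- FTC: the integral of f vanishes
  have hFTC : ∫ t in (0:ℝ)..(π/2), f t = 0 := by
    rw [intervalIntegral.integral_eq_sub_of_hasDeriv_right_of_le hpi.le hFcont
      (fun x hx => (hFderiv x hx).hasDerivWithinAt) hfint]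
    simp [hFdef, h0]
  -- the main integral rearranged
  have hmain : ∫ t in (0:ℝ)..(π/2), ((1/2) * h' t ^ 2 - h t ^ 2) * Real.cos t = 0 := by
    have : (fun t => ((1/2) * h' t ^ 2 - h t ^ 2) * Real.cos t)
        = fun t => -((h t ^ 2 - (1/2) * h' t ^ 2) * Real.cos t) := by funext t; ring
    rw [this, intervalIntegral.integral_neg, hF, neg_zero]
  set A : ℝ → ℝ := fun t => ((1/2) * h' t ^ 2 - h t ^ 2) * Real.cos t with hAdef
  have hAint : IntervalIntegrable A volume 0 (π/2) := by
    apply ContinuousOn.intervalIntegrable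
    rw [uIcc_of_le hpi.le]
    exact ((continuousOn_const.mul (hch'.pow 2)).sub (hch.pow 2)).mul
      Real.continuous_cos.continuousOn
  -- the pointwise identity
  have hident : ∀ t ∈ Ioc (0:ℝ) (π/2), g t = A t - f t := by
    intro t ht
    have hs0 : Real.sin t ≠ 0 := (hsinpos t ht).ne'
    simp only [hgdef, hAdef, hfdef]
    field_simp
    ring
  -- g is integrable on Ioc
  have hgmeas : ContinuousOn g (Ioc (0:ℝ) (π/2)) := by
    have h1 : ContinuousOn h (Ioc (0:ℝ) (π/2)) := hch.mono Ioc_subset_Icc_self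
    have h2 : ContinuousOn h' (Ioc (0:ℝ) (π/2)) := hch'.mono Ioc_subset_Icc_self
    refine ContinuousOn.div ?_ ?_ ?_
    · exact (((h2.mul Real.continuous_sin.continuousOn).sub
        (h1.mul Real.continuous_cos.continuousOn)).pow 2).mul
        Real.continuous_cos.continuousOn
    · exact continuousOn_const.mul (Real.continuous_sin.continuousOn.pow 2)
    · intro x hx
      have := hsinpos x hx
      positivity
  have hgint : IntegrableOn g (Ioc (0:ℝ) (π/2)) volume := by
    have hAf : IntegrableOn (fun t => A t - f t) (Ioc (0:ℝ) (π/2)) volume := by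
      have := hAint.sub hfint
      rwa [intervalIntegrable_iff_integrableOn_Ioc_of_le hpi.le] at this
    exact hAf.congr_fun (fun t ht => (hident t ht).symm) measurableSet_Ioc
  -- the integral of g vanishes
  have hgzero : ∫ t in Ioc (0:ℝ) (π/2), g t = 0 := by
    have e1 : ∫ t in Ioc (0:ℝ) (π/2), g t = ∫ t in Ioc (0:ℝ) (π/2), (A t - f t) :=
      setIntegral_congr_fun measurableSet_Ioc (fun t ht => hident t ht)
    have hAI : IntegrableOn A (Ioc (0:ℝ) (π/2)) volume := by
      rwa [intervalIntegrable_iff_integrableOn_Ioc_of_le hpi.le] at hAint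
    have hfI : IntegrableOn f (Ioc (0:ℝ) (π/2)) volume := by
      rwa [intervalIntegrable_iff_integrableOn_Ioc_of_le hpi.le] at hfint
    rw [e1, integral_sub hAI hfI]
    have eA : ∫ t in Ioc (0:ℝ) (π/2), A t = ∫ t in (0:ℝ)..(π/2), A t :=
      (intervalIntegral.integral_of_le hpi.le).symm
    have ef : ∫ t in Ioc (0:ℝ) (π/2), f t = ∫ t in (0:ℝ)..(π/2), f t :=
      (intervalIntegral.integral_of_le hpi.le).symm
    rw [eA, ef, hmain, hFTC, sub_zero]
  -- g is nonneg
  have hgnn : ∀ t ∈ Ioc (0:ℝ) (π/2), 0 ≤ g t := by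
    intro t ht
    have hcos : 0 ≤ Real.cos t := Real.cos_nonneg_of_mem_Icc ⟨by linarith [ht.1], ht.2⟩
    have := hsinpos t ht
    exact div_nonneg (mul_nonneg (sq_nonneg _) hcos) (by positivity)
  -- g vanishes a.e. on Ioc
  have hgae : g =ᵐ[volume.restrict (Ioc (0:ℝ) (π/2))] 0 := by
    refine (integral_eq_zero_iff_of_nonneg_ae ?_ hgint).1 hgzero
    exact (ae_restrict_iff' measurableSet_Ioc).2 (ae_of_all _ hgnn)
  -- hence g vanishes on the open interval
  have hgzero' : ∀ t ∈ Ioo (0:ℝ) (π/2), g t = 0 := by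
    have := Measure.eqOn_open_of_ae_eq
      (ae_restrict_of_ae_restrict_of_subset Ioo_subset_Ioc_self hgae)
      isOpen_Ioo (hgmeas.mono Ioo_subset_Ioc_self) continuousOn_const
    exact fun t ht => this ht
  -- hence the Wronskian-type expression vanishes
  have hw : ∀ t ∈ Ioo (0:ℝ) (π/2), h' t * Real.sin t - h t * Real.cos t = 0 := by
    intro t ht
    have h1 := hgzero' t ht
    have hs := hsinpos t ⟨ht.1, ht.2.le⟩
    have hc : 0 < Real.cos t := Real.cos_pos_of_mem_Ioo ⟨by linarith [ht.1], ht.2⟩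
    simp only [hgdef] at h1
    rw [div_eq_zero_iff] at h1
    rcases h1 with h1 | h1
    · rcases mul_eq_zero.1 h1 with h1 | h1
      · exact sq_eq_zero_iff.1 h1
      · exact absurd h1 hc.ne'
    · exact absurd h1 (by positivity)
  -- conclude: h t / sin t is constant
  refine ⟨h (π/2), fun t ht => ?_⟩
  rcases eq_or_lt_of_le ht.1 with h0t | h0t
  · rw [← h0t, h0, Real.sin_zero, mul_zero]
  · have hsint : 0 < Real.sin t := hsinpos t ⟨h0t, ht.2⟩
    have key : ∀ x ∈ Icc t (π/2), h x / Real.sin x = h t / Real.sin t := by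
      apply constant_of_has_deriv_right_zero
      · apply ContinuousOn.div (hch.mono ?_) Real.continuous_sin.continuousOn ?_
        · exact fun x hx => ⟨by linarith [hx.1], hx.2⟩
        · exact fun x hx => (hsinpos x ⟨lt_of_lt_of_le h0t hx.1, hx.2⟩).ne'
      · intro x hx
        have hxI : x ∈ Ioo (0:ℝ) (π/2) := ⟨lt_of_lt_of_le h0t hx.1, hx.2⟩
        have hs0 : Real.sin x ≠ 0 := (hsinpos x ⟨hxI.1, hxI.2.le⟩).ne'
        have H := (hhD x hxI).div (Real.hasDerivAt_sin x) hs0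
        have hz : (h' x * Real.sin x - h x * Real.cos x) / Real.sin x ^ 2 = 0 := by
          rw [hw x hxI, zero_div]
        rw [hz] at H
        exact H.hasDerivWithinAt
    have hkey := key (π/2) ⟨ht.2, le_refl _⟩
    rw [Real.sin_pi_div_two, div_one] at hkey
    rw [hkey, div_mul_cancel₀ _ hsint.ne']
end

section
/- For every h ∈ E, setting g(t) := h(t) cos t − h'(t) sin t, the function t ↦ g(t)² cos t / sin² t is Lebesgue integrable on (0, π/2) and ∫₀^{π/2} (h(t)² − (1/2) h'(t)²) cos t dt = −(1/2) ∫₀^{π/2} g(t)² cos t / sin² t dt. -/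
open Real MeasureTheory Set

set_option maxHeartbeats 1000000 in
/-- For `h ∈ E`, setting `g t = h t cos t − h' t sin t`, the function
`t ↦ g(t)² cos t / sin² t` is integrable on `(0, π/2)` and
`∫₀^{π/2} (h² − (1/2) h'²) cos t dt = −(1/2) ∫₀^{π/2} g² cos t / sin² t dt`. -/
theorem F_eq_neg_half_integral (h h' : ℝ → ℝ) (hE : MemE h h') :
    IntegrableOn
      (fun t => (h t * Real.cos t - h' t * Real.sin t) ^ 2 * Real.cos t / Real.sin t ^ 2)
      (Ioo (0:ℝ) (π/2)) volume ∧
    ∫ t in (0:ℝ)..(π/2), (h t ^ 2 - (1/2) * h' t ^ 2) * Real.cos t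
      = -(1/2) * ∫ t in Ioo (0:ℝ) (π/2),
          (h t * Real.cos t - h' t * Real.sin t) ^ 2 * Real.cos t / Real.sin t ^ 2 := by
  obtain ⟨K, hK⟩ := hE.lipschitz
  have hπ : (0:ℝ) < π/2 := by positivity
  set I : Set ℝ := Icc (0:ℝ) (π/2) with hI
  have h0I : (0:ℝ) ∈ I := ⟨le_refl _, hπ.le⟩
  have hconv : Convex ℝ I := convex_Icc _ _
  have h'cont : ContinuousOn h' I := hK.continuousOn
  have hcont : ContinuousOn h I := fun t ht => (hE.hasDeriv t ht).continuousWithinAt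
  -- bound on h'
  obtain ⟨M, hM⟩ : ∃ M, ∀ t ∈ I, ‖h' t‖ ≤ M := (isCompact_Icc).exists_bound_of_continuousOn h'cont
  have hM0 : 0 ≤ M := le_trans (norm_nonneg _) (hM 0 h0I)
  -- |h t| ≤ M * t on I
  have hhM : ∀ t ∈ I, |h t| ≤ M * t := by
    intro t ht
    have := hconv.norm_image_sub_le_of_norm_hasDerivWithin_le hE.hasDeriv hM h0I ht
    simpa [hE.h_zero, Real.norm_eq_abs, abs_of_nonneg ht.1] using this
  -- |h t - t * h' 0| ≤ K * t^2 on I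
  have hfine : ∀ t ∈ I, |h t - t * h' 0| ≤ K * t ^ 2 := by
    intro t ht
    have hsub : Icc (0:ℝ) t ⊆ I := Icc_subset_Icc le_rfl ht.2
    have hd : ∀ s ∈ Icc (0:ℝ) t, HasDerivWithinAt (fun s => h s - s * h' 0)
        (h' s - h' 0) (Icc (0:ℝ) t) s := by
      intro s hs
      exact ((hE.hasDeriv s (hsub hs)).mono hsub).sub
        (((hasDerivAt_id s).mul_const (h' 0)).hasDerivWithinAt.congr_deriv (by ring))
    have hb : ∀ s ∈ Icc (0:ℝ) t, ‖h' s - h' 0‖ ≤ K * t := by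
      intro s hs
      have := hK.norm_sub_le (hsub hs) h0I
      simp only [sub_zero] at this
      refine this.trans ?_
      have : ‖s‖ ≤ t := by rw [Real.norm_eq_abs, abs_of_nonneg hs.1]; exact hs.2
      exact mul_le_mul_of_nonneg_left this (by positivity)
    have := (convex_Icc _ _).norm_image_sub_le_of_norm_hasDerivWithin_le hd hb
      (⟨le_refl _, ht.1⟩ : (0:ℝ) ∈ Icc (0:ℝ) t) ⟨ht.1, le_refl _⟩
    simpa [hE.h_zero, Real.norm_eq_abs, abs_of_nonneg ht.1, sq, mul_assoc] using this
  -- |sin t - t cos t| ≤ t^2 on I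
  have hsc : ∀ t ∈ I, |Real.sin t - t * Real.cos t| ≤ t ^ 2 := by
    intro t ht
    have hd : ∀ s ∈ Icc (0:ℝ) t, HasDerivWithinAt (fun s => Real.sin s - s * Real.cos s)
        (s * Real.sin s) (Icc (0:ℝ) t) s := by
      intro s hs
      have := (Real.hasDerivAt_sin s).sub ((hasDerivAt_id s).mul (Real.hasDerivAt_cos s))
      have h2 : Real.cos s - (1 * Real.cos s + s * -Real.sin s) = s * Real.sin s := by ring
      exact (h2 ▸ this).hasDerivWithinAt
    have hb : ∀ s ∈ Icc (0:ℝ) t, ‖s * Real.sin s‖ ≤ t := by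
      intro s hs
      rw [Real.norm_eq_abs, abs_mul]
      calc |s| * |Real.sin s| ≤ t * 1 := by
            apply mul_le_mul
            · rw [abs_of_nonneg hs.1]; exact hs.2
            · exact Real.abs_sin_le_one s
            · exact abs_nonneg _
            · linarith [hs.1, hs.2]
        _ = t := mul_one t
    have := (convex_Icc _ _).norm_image_sub_le_of_norm_hasDerivWithin_le hd hb
      (⟨le_refl _, ht.1⟩ : (0:ℝ) ∈ Icc (0:ℝ) t) ⟨ht.1, le_refl _⟩
    simpa [Real.norm_eq_abs, abs_of_nonneg ht.1, sq, mul_assoc] using this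
  -- |g t| ≤ C * t^2
  set C : ℝ := 2 * K + |h' 0| with hC
  have hC0 : 0 ≤ C := by positivity
  have hg : ∀ t ∈ I, |h t * Real.cos t - h' t * Real.sin t| ≤ C * t ^ 2 := by
    intro t ht
    have e1 : h t * Real.cos t - h' t * Real.sin t
        = (h t - t * h' 0) * Real.cos t - h' 0 * (Real.sin t - t * Real.cos t)
          + (h' 0 - h' t) * Real.sin t := by ring
    rw [e1]
    have b1 : |(h t - t * h' 0) * Real.cos t| ≤ K * t ^ 2 := by
      rw [abs_mul]
      calc |h t - t * h' 0| * |Real.cos t| ≤ (K * t ^ 2) * 1 :=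
            mul_le_mul (hfine t ht) (Real.abs_cos_le_one t) (abs_nonneg _) (by positivity)
        _ = K * t ^ 2 := mul_one _
    have b2 : |h' 0 * (Real.sin t - t * Real.cos t)| ≤ |h' 0| * t ^ 2 := by
      rw [abs_mul]
      exact mul_le_mul_of_nonneg_left (hsc t ht) (abs_nonneg _)
    have b3 : |(h' 0 - h' t) * Real.sin t| ≤ K * t ^ 2 := by
      rw [abs_mul]
      have h1 : |h' 0 - h' t| ≤ K * t := by
        have := hK.norm_sub_le h0I ht
        simp only [zero_sub, norm_neg, sub_zero] at this
        rw [Real.norm_eq_abs, Real.norm_eq_abs, abs_of_nonneg ht.1] at this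
        exact this
      have h2 : |Real.sin t| ≤ t := by
        rw [abs_of_nonneg (Real.sin_nonneg_of_nonneg_of_le_pi ht.1 (ht.2.trans (by linarith [Real.pi_pos])))]
        exact Real.sin_le ht.1
      calc |h' 0 - h' t| * |Real.sin t| ≤ (K * t) * t :=
            mul_le_mul h1 h2 (abs_nonneg _) (mul_nonneg (by positivity) ht.1)
        _ = K * t ^ 2 := by ring
    calc |(h t - t * h' 0) * Real.cos t - h' 0 * (Real.sin t - t * Real.cos t)
          + (h' 0 - h' t) * Real.sin t|
        ≤ |(h t - t * h' 0) * Real.cos t - h' 0 * (Real.sin t - t * Real.cos t)|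
          + |(h' 0 - h' t) * Real.sin t| := abs_add_le _ _
      _ ≤ (|(h t - t * h' 0) * Real.cos t| + |h' 0 * (Real.sin t - t * Real.cos t)|)
          + |(h' 0 - h' t) * Real.sin t| := by gcongr; exact abs_sub _ _
      _ ≤ (K * t ^ 2 + |h' 0| * t ^ 2) + K * t ^ 2 := by gcongr
      _ = C * t ^ 2 := by rw [hC]; ring
  have hIoosub : Ioo (0:ℝ) (π/2) ⊆ I := Ioo_subset_Icc_self
  have hsinpos : ∀ t ∈ Ioo (0:ℝ) (π/2), 0 < Real.sin t := fun t ht =>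
    Real.sin_pos_of_pos_of_lt_pi ht.1 (ht.2.trans (by linarith [Real.pi_pos]))
  have hcospos : ∀ t ∈ Ioo (0:ℝ) (π/2), 0 < Real.cos t := fun t ht =>
    Real.cos_pos_of_mem_Ioo ⟨by linarith [ht.1, Real.pi_pos], ht.2⟩
  set G : ℝ → ℝ := fun t =>
    (h t * Real.cos t - h' t * Real.sin t) ^ 2 * Real.cos t / Real.sin t ^ 2 with hGdef
  set B : ℝ := C ^ 2 * (π/2) ^ 2 * (π/2) ^ 2 with hB
  have hGbound : ∀ t ∈ Ioo (0:ℝ) (π/2), ‖G t‖ ≤ B := by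
    intro t ht
    have htI : t ∈ I := hIoosub ht
    have hsp := hsinpos t ht
    have hcp := hcospos t ht
    have hs : 2 / π * t ≤ Real.sin t := Real.mul_le_sin ht.1.le ht.2.le
    have hgt := hg t htI
    have hg2 : (h t * Real.cos t - h' t * Real.sin t) ^ 2 ≤ (C * t ^ 2) ^ 2 := by
      rw [← sq_abs]
      exact pow_le_pow_left₀ (abs_nonneg _) hgt 2
    have hs2 : (2 / π * t) ^ 2 ≤ Real.sin t ^ 2 := by
      exact pow_le_pow_left₀ (mul_nonneg (by positivity) ht.1.le) hs 2
    have hGnn : 0 ≤ G t :=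
      div_nonneg (mul_nonneg (sq_nonneg _) hcp.le) (sq_nonneg _)
    rw [Real.norm_eq_abs, abs_of_nonneg hGnn]
    show _ / _ ≤ B
    rw [div_le_iff₀ (by positivity)]
    have step1 : (h t * Real.cos t - h' t * Real.sin t) ^ 2 * Real.cos t ≤ (C * t ^ 2) ^ 2 := by
      calc (h t * Real.cos t - h' t * Real.sin t) ^ 2 * Real.cos t
          ≤ (C * t ^ 2) ^ 2 * 1 := by
            apply mul_le_mul hg2 (Real.cos_le_one t) hcp.le (by positivity)
        _ = (C * t ^ 2) ^ 2 := mul_one _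
    refine step1.trans ?_
    have hπ0 : π ≠ 0 := Real.pi_ne_zero
    have step2 : B * (2 / π * t) ^ 2 = C ^ 2 * (π/2) ^ 2 * t ^ 2 := by
      rw [hB]; field_simp
    calc (C * t ^ 2) ^ 2 = C ^ 2 * t ^ 2 * t ^ 2 := by ring
      _ ≤ C ^ 2 * (π/2) ^ 2 * t ^ 2 := by
          have : t ^ 2 ≤ (π/2) ^ 2 := pow_le_pow_left₀ ht.1.le ht.2.le 2
          nlinarith [mul_le_mul_of_nonneg_left this (mul_nonneg (sq_nonneg C) (sq_nonneg t))]
      _ = B * (2 / π * t) ^ 2 := step2.symm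
      _ ≤ B * Real.sin t ^ 2 := by
          apply mul_le_mul_of_nonneg_left hs2
          rw [hB]; positivity
  have hGcont : ContinuousOn G (Ioo (0:ℝ) (π/2)) := by
    apply ContinuousOn.div
    · exact ((((hcont.mono hIoosub).mul Real.continuous_cos.continuousOn).sub
        ((h'cont.mono hIoosub).mul Real.continuous_sin.continuousOn)).pow 2).mul
        Real.continuous_cos.continuousOn
    · exact Real.continuous_sin.continuousOn.pow 2
    · intro t ht; exact pow_ne_zero 2 (ne_of_gt (hsinpos t ht))
  have hGmeas : AEStronglyMeasurable G (volume.restrict (Ioo (0:ℝ) (π/2))) :=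
    hGcont.aestronglyMeasurable measurableSet_Ioo
  have hGint : IntegrableOn G (Ioo (0:ℝ) (π/2)) volume := by
    apply Integrable.mono' (integrable_const B) hGmeas
    rw [ae_restrict_iff' measurableSet_Ioo]
    filter_upwards with t ht
    exact hGbound t ht
  -- the antiderivative
  set F : ℝ → ℝ := fun t => h t ^ 2 * Real.cos t ^ 2 / (2 * Real.sin t) with hF
  set F' : ℝ → ℝ := fun t => h t * h' t * Real.cos t ^ 2 / Real.sin t
      - h t ^ 2 * Real.cos t - h t ^ 2 * Real.cos t ^ 3 / (2 * Real.sin t ^ 2) with hF'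
  have hF0 : F 0 = 0 := by simp [hF, hE.h_zero]
  have hFpi : F (π/2) = 0 := by simp [hF, Real.cos_pi_div_two]
  have hFcont : ContinuousOn F I := by
    intro t ht
    rcases eq_or_lt_of_le ht.1 with h0 | h0
    · -- continuity at 0 via squeeze
      have hbd : ∀ s ∈ I, ‖F s‖ ≤ π * M ^ 2 / 4 * s := by
        intro s hs
        rcases eq_or_lt_of_le hs.1 with hs0 | hs0
        · rw [← hs0]; simp [hF0]
        · have hsp : 0 < Real.sin s :=
            Real.sin_pos_of_pos_of_lt_pi hs0 (lt_of_le_of_lt hs.2 (by linarith [Real.pi_pos]))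
          have hms : 2 / π * s ≤ Real.sin s := Real.mul_le_sin hs.1 hs.2
          have hnum : h s ^ 2 * Real.cos s ^ 2 ≤ M ^ 2 * s ^ 2 := by
            have h1 : h s ^ 2 ≤ (M * s) ^ 2 := by
              rw [← sq_abs]; exact pow_le_pow_left₀ (abs_nonneg _) (hhM s hs) 2
            nlinarith [Real.cos_sq_le_one s, sq_nonneg (h s), sq_nonneg (Real.cos s)]
          have hFnn : 0 ≤ F s := by
            apply div_nonneg (by positivity) (by positivity)
          rw [Real.norm_eq_abs, abs_of_nonneg hFnn]
          show h s ^ 2 * Real.cos s ^ 2 / (2 * Real.sin s) ≤ _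
          have hd : 4 / π * s ≤ 2 * Real.sin s := by
            have := mul_le_mul_of_nonneg_left hms (by norm_num : (0:ℝ) ≤ 2)
            calc 4 / π * s = 2 * (2 / π * s) := by ring
              _ ≤ 2 * Real.sin s := this
          calc h s ^ 2 * Real.cos s ^ 2 / (2 * Real.sin s)
              ≤ M ^ 2 * s ^ 2 / (4 / π * s) :=
                div_le_div₀ (by positivity) hnum (by positivity) hd
            _ = π * M ^ 2 / 4 * s := by
                field_simp
      have htend : Filter.Tendsto (fun s => π * M ^ 2 / 4 * s) (nhdsWithin 0 I) (nhds 0) := by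
        have h1 : Filter.Tendsto (fun s : ℝ => π * M ^ 2 / 4 * s) (nhds 0)
            (nhds (π * M ^ 2 / 4 * 0)) :=
          (continuous_const.mul continuous_id).tendsto 0
        rw [mul_zero] at h1
        exact h1.mono_left nhdsWithin_le_nhds
      have : Filter.Tendsto F (nhdsWithin 0 I) (nhds 0) := by
        apply squeeze_zero_norm' _ htend
        filter_upwards [self_mem_nhdsWithin] with s hs
        exact hbd s hs
      rw [← h0]
      exact ContinuousWithinAt.mono (by rwa [ContinuousWithinAt, hF0]) le_rfl
    · -- continuity at t > 0
      have hsp : 0 < Real.sin t :=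
        Real.sin_pos_of_pos_of_lt_pi h0 (lt_of_le_of_lt ht.2 (by linarith [Real.pi_pos]))
      exact (((hcont t ht).pow 2).mul
        ((Real.continuous_cos.continuousAt.continuousWithinAt).pow 2)).div
        ((continuous_const.mul Real.continuous_sin).continuousAt.continuousWithinAt)
        (by positivity)
  have hFderiv : ∀ x ∈ Ioo (0:ℝ) (π/2), HasDerivAt F (F' x) x := by
    intro x hx
    have hsp := hsinpos x hx
    have hhx : HasDerivAt h (h' x) x :=
      (hE.hasDeriv x (hIoosub hx)).hasDerivAt (Icc_mem_nhds hx.1 hx.2)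
    have hnum : HasDerivAt (fun t => h t ^ 2 * Real.cos t ^ 2)
        ((2 * h x ^ 1 * h' x) * Real.cos x ^ 2
          + h x ^ 2 * (2 * Real.cos x ^ 1 * -Real.sin x)) x :=
      (hhx.pow 2).mul ((Real.hasDerivAt_cos x).pow 2)
    have hden : HasDerivAt (fun t => 2 * Real.sin t) (2 * Real.cos x) x :=
      (Real.hasDerivAt_sin x).const_mul 2
    have := hnum.div hden (by positivity)
    refine this.congr_deriv ?_
    rw [hF']
    field_simp
    ring
  have hPint : IntegrableOn (fun t => (h t ^ 2 - (1/2) * h' t ^ 2) * Real.cos t)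
      (Ioo (0:ℝ) (π/2)) volume := by
    apply IntegrableOn.mono_set _ (Ioo_subset_Icc_self (a := (0:ℝ)) (b := π/2))
    apply ContinuousOn.integrableOn_Icc
    exact (((hcont.pow 2).sub ((h'cont.pow 2).const_smul ((1:ℝ)/2))).mul
      Real.continuous_cos.continuousOn)
  have hkey : ∀ t ∈ Ioo (0:ℝ) (π/2),
      (h t ^ 2 - (1/2) * h' t ^ 2) * Real.cos t = -(1/2) * G t - F' t := by
    intro t ht
    have hsp := hsinpos t ht
    rw [hGdef, hF']
    have : Real.sin t ≠ 0 := ne_of_gt hsp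
    field_simp
    ring
  have hF'Ioo : IntegrableOn F' (Ioo (0:ℝ) (π/2)) volume := by
    have h1 : IntegrableOn (fun t => -(1/2) * G t
        - (h t ^ 2 - (1/2) * h' t ^ 2) * Real.cos t) (Ioo (0:ℝ) (π/2)) volume :=
      (hGint.const_mul _).sub hPint
    apply h1.congr_fun _ measurableSet_Ioo
    intro t ht
    have := hkey t ht
    simp only
    linarith [this]
  have hF'int : IntervalIntegrable F' volume 0 (π/2) :=
    (intervalIntegrable_iff_integrableOn_Ioo_of_le hπ.le).2 hF'Ioo
  have hFTC : ∫ t in (0:ℝ)..(π/2), F' t = 0 := by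
    rw [intervalIntegral.integral_eq_sub_of_hasDeriv_right_of_le hπ.le hFcont
      (fun x hx => (hFderiv x hx).hasDerivWithinAt) hF'int, hFpi, hF0, sub_zero]
  have hIooF' : ∫ t in Ioo (0:ℝ) (π/2), F' t = 0 := by
    rw [← MeasureTheory.integral_Ioc_eq_integral_Ioo, ← intervalIntegral.integral_of_le hπ.le]
    exact hFTC
  refine ⟨hGint, ?_⟩
  rw [intervalIntegral.integral_of_le hπ.le, MeasureTheory.integral_Ioc_eq_integral_Ioo]
  calc ∫ t in Ioo (0:ℝ) (π/2), (h t ^ 2 - (1/2) * h' t ^ 2) * Real.cos t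
      = ∫ t in Ioo (0:ℝ) (π/2), (-(1/2) * G t - F' t) :=
        setIntegral_congr_fun measurableSet_Ioo hkey
    _ = (∫ t in Ioo (0:ℝ) (π/2), -(1/2) * G t) - ∫ t in Ioo (0:ℝ) (π/2), F' t :=
        integral_sub (hGint.const_mul _) hF'Ioo
    _ = -(1/2) * ∫ t in Ioo (0:ℝ) (π/2), G t := by
        rw [hIooF', MeasureTheory.integral_const_mul, sub_zero]
end

section
/- Let h : [0, π/2] → ℝ be differentiable and satisfy the linear differential equation h(t) cos t = h'(t) sin t for all t ∈ [0, π/2]. Then there exists a real constant c such that h(t) = c sin t for all t ∈ [0, π/2]. -/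
open Real Set

/-- If `h : [0, π/2] → ℝ` is differentiable with derivative `h'` and satisfies
the linear differential equation `h t cos t = h' t sin t` on `[0, π/2]`, then
`h t = c sin t` on `[0, π/2]` for some real constant `c`. -/
theorem solutions_of_ode (h h' : ℝ → ℝ)
    (hderiv : ∀ t ∈ Icc (0:ℝ) (π/2), HasDerivWithinAt h (h' t) (Icc (0:ℝ) (π/2)) t)
    (hode : ∀ t ∈ Icc (0:ℝ) (π/2), h t * Real.cos t = h' t * Real.sin t) :
    ∃ c : ℝ, ∀ t ∈ Icc (0:ℝ) (π/2), h t = c * Real.sin t := by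
  refine ⟨h (π/2), fun t ht => ?_⟩
  obtain ⟨ht0, ht1⟩ := ht
  rcases eq_or_lt_of_le ht0 with h0 | h0
  · -- t = 0 : ODE at 0 forces h 0 = 0
    have := hode 0 ⟨le_rfl, by positivity⟩
    simp only [Real.cos_zero, Real.sin_zero, mul_one, mul_zero] at this
    simp [← h0, this]
  rcases eq_or_lt_of_le ht1 with h1 | h1
  · simp [h1]
  -- 0 < t < π/2
  set g : ℝ → ℝ := fun x => h x / Real.sin x with hg
  have hsinpos : ∀ x ∈ Icc t (π/2), 0 < Real.sin x := by
    intro x hx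
    apply Real.sin_pos_of_pos_of_lt_pi (lt_of_lt_of_le h0 hx.1)
    calc x ≤ π/2 := hx.2
    _ < π := by linarith [Real.pi_pos]
  have key : ∀ x ∈ Icc t (π/2), HasDerivWithinAt g 0 (Icc t (π/2)) x := by
    intro x hx
    have hx' : x ∈ Icc (0:ℝ) (π/2) := ⟨le_trans ht0 hx.1, hx.2⟩
    have hd : HasDerivWithinAt h (h' x) (Icc t (π/2)) x :=
      (hderiv x hx').mono (Icc_subset_Icc ht0 le_rfl)
    have hs : HasDerivWithinAt Real.sin (Real.cos x) (Icc t (π/2)) x :=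
      (Real.hasDerivAt_sin x).hasDerivWithinAt
    have hne := (hsinpos x hx).ne'
    have := hd.div hs hne
    refine this.congr_deriv ?_
    have := hode x hx'
    rw [this]
    simp
  have hdiff : DifferentiableOn ℝ g (Icc t (π/2)) :=
    fun x hx => (key x hx).differentiableWithinAt
  have hzero : ∀ x ∈ Ico t (π/2), derivWithin g (Icc t (π/2)) x = 0 := fun x hx =>
    (key x (Ico_subset_Icc_self hx)).derivWithin
      ((uniqueDiffOn_Icc h1) x (Ico_subset_Icc_self hx))
  have hconst := constant_of_derivWithin_zero hdiff hzero (π/2) (right_mem_Icc.2 h1.le)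
  have hst : Real.sin t ≠ 0 := (hsinpos t ⟨le_rfl, h1.le⟩).ne'
  simp only [hg, Real.sin_pi_div_two, div_one] at hconst
  field_simp at hconst
  linarith
end

section
/- Let w ∈ ℝ and let h : [−π/2, π/2] → ℝ be twice continuously differentiable, odd (h(−t) = −h(t) for all t), with h'(π/2) = 0. Define x(t) := (w + h(t)) cos t − h'(t) sin t and y(t) := (w + h(t)) sin t + h'(t) cos t. Then (2π/3) ∫_{−π/2}^{π/2} x(t) (y'(t) x(t) − y(t) x'(t)) dt = 4π ( w³/3 + w ∫₀^{π/2} (h(t)² − (1/2) h'(t)²) cos t dt ). -/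
open Real MeasureTheory Set

/-- Volume formula for constant width bodies of revolution: if `h` is `C²` on
`[−π/2, π/2]`, odd, with `h' (π/2) = 0`, and the generating curve is
`γ = (x, y)` with `x t = (w + h t) cos t − h' t sin t`,
`y t = (w + h t) sin t + h' t cos t`, then
`(2π/3) ∫_{−π/2}^{π/2} x (y' x − y x') dt
  = 4π (w³/3 + w ∫₀^{π/2} (h² − (1/2) h'²) cos t dt)`. -/
theorem volume_formula (w : ℝ) (h h' h'' x y x' y' : ℝ → ℝ)
    (hh : ∀ t ∈ Icc (-(π/2)) (π/2), HasDerivWithinAt h (h' t) (Icc (-(π/2)) (π/2)) t)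
    (hh' : ∀ t ∈ Icc (-(π/2)) (π/2), HasDerivWithinAt h' (h'' t) (Icc (-(π/2)) (π/2)) t)
    (hh''cont : ContinuousOn h'' (Icc (-(π/2)) (π/2)))
    (hodd : ∀ t ∈ Icc (-(π/2)) (π/2), h (-t) = - h t)
    (hbc : h' (π/2) = 0)
    (hx : ∀ t, x t = (w + h t) * Real.cos t - h' t * Real.sin t)
    (hy : ∀ t, y t = (w + h t) * Real.sin t + h' t * Real.cos t)
    (hx' : ∀ t ∈ Icc (-(π/2)) (π/2), HasDerivWithinAt x (x' t) (Icc (-(π/2)) (π/2)) t)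
    (hy' : ∀ t ∈ Icc (-(π/2)) (π/2), HasDerivWithinAt y (y' t) (Icc (-(π/2)) (π/2)) t) :
    (2 * π / 3) * ∫ t in (-(π/2))..(π/2), x t * (y' t * x t - y t * x' t)
      = 4 * π * (w ^ 3 / 3
          + w * ∫ t in (0:ℝ)..(π/2), (h t ^ 2 - (1/2) * h' t ^ 2) * Real.cos t) := by
  have hpi : (0:ℝ) < π/2 := by positivity
  set I : Set ℝ := Icc (-(π/2)) (π/2) with hIdef
  have hUD : UniqueDiffOn ℝ I := uniqueDiffOn_Icc (by linarith)
  have hmemneg : ∀ t ∈ I, -t ∈ I := by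
    intro t ht; simp only [hIdef, mem_Icc] at ht ⊢; constructor <;> linarith [ht.1, ht.2]
  have hch : ContinuousOn h I := fun t ht => (hh t ht).continuousWithinAt
  have hch' : ContinuousOn h' I := fun t ht => (hh' t ht).continuousWithinAt
  -- h' is even on I
  have heven : ∀ t ∈ I, h' (-t) = h' t := by
    intro t ht
    have hnt : -t ∈ I := hmemneg t ht
    have d0 : HasDerivWithinAt (fun s => h (-s)) (h' (-t) * (-1)) I t :=
      HasDerivWithinAt.comp t (hh (-t) hnt) ((hasDerivAt_neg t).hasDerivWithinAt)
        (fun s hs => hmemneg s hs)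
    have d1 : HasDerivWithinAt (fun s => -h (-s)) (h' (-t)) I t := by
      have d0n := d0.neg
      rw [mul_neg, mul_one, neg_neg] at d0n
      exact d0n
    have d2 : HasDerivWithinAt h (h' (-t)) I t := by
      refine d1.congr (fun s hs => ?_) ?_
      · rw [hodd s hs]; ring
      · rw [hodd t ht]; ring
    exact (d2.derivWithin (hUD t ht)).symm.trans ((hh t ht).derivWithin (hUD t ht))
  have hmra : π/2 ∈ I := by simp only [hIdef, mem_Icc]; constructor <;> linarith
  have hbc' : h' (-(π/2)) = 0 := (heven _ hmra).trans hbc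
  -- formulas for x' and y'
  have hx'eq : ∀ t ∈ I, x' t = -(((w + h t) + h'' t) * Real.sin t) := by
    intro t ht
    have dX : HasDerivWithinAt (fun s => (w + h s) * Real.cos s - h' s * Real.sin s)
        (-(((w + h t) + h'' t) * Real.sin t)) I t := by
      have base := (((hh t ht).const_add w).mul
          ((Real.hasDerivAt_cos t).hasDerivWithinAt (s := I))).sub
        ((hh' t ht).mul ((Real.hasDerivAt_sin t).hasDerivWithinAt (s := I)))
      exact base.congr_deriv (by ring)
    have dXx : HasDerivWithinAt x (-(((w + h t) + h'' t) * Real.sin t)) I t :=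
      dX.congr (fun s _ => hx s) (hx t)
    exact ((hx' t ht).derivWithin (hUD t ht)).symm.trans (dXx.derivWithin (hUD t ht))
  have hy'eq : ∀ t ∈ I, y' t = ((w + h t) + h'' t) * Real.cos t := by
    intro t ht
    have dY : HasDerivWithinAt (fun s => (w + h s) * Real.sin s + h' s * Real.cos s)
        (((w + h t) + h'' t) * Real.cos t) I t := by
      have base := (((hh t ht).const_add w).mul
          ((Real.hasDerivAt_sin t).hasDerivWithinAt (s := I))).add
        ((hh' t ht).mul ((Real.hasDerivAt_cos t).hasDerivWithinAt (s := I)))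
      exact base.congr_deriv (by ring)
    have dYy : HasDerivWithinAt y (((w + h t) + h'' t) * Real.cos t) I t :=
      dY.congr (fun s _ => hy s) (hy t)
    exact ((hy' t ht).derivWithin (hUD t ht)).symm.trans (dYy.derivWithin (hUD t ht))
  -- notation for the pieces
  set F : ℝ → ℝ := fun t => ((w + h t) * Real.cos t - h' t * Real.sin t) *
      ((w + h t) * ((w + h t) + h'' t)) with hFdef
  set B : ℝ → ℝ := fun t => (w + h t)^2 * h' t * Real.cos t
      - (1/2) * (w + h t) * h' t^2 * Real.sin t with hBdef
  set Bd : ℝ → ℝ := fun t => (3/2)*(w + h t)*h' t^2*Real.cos t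
      + (w + h t)^2*h'' t*Real.cos t - (w + h t)^2*h' t*Real.sin t
      - (1/2)*h' t^3*Real.sin t - (w + h t)*h' t*h'' t*Real.sin t with hBddef
  set G : ℝ → ℝ := fun t => (w + h t)^3*Real.cos t - (3/2)*(w + h t)*h' t^2*Real.cos t
      + (1/2)*h' t^3*Real.sin t with hGdef
  -- rewrite the integrand
  have hIeq : (∫ t in (-(π/2))..(π/2), x t * (y' t * x t - y t * x' t))
      = ∫ t in (-(π/2))..(π/2), F t := by
    refine intervalIntegral.integral_congr ?_
    intro t ht
    rw [uIcc_of_le (by linarith)] at ht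
    show x t * (y' t * x t - y t * x' t) = F t
    have hFT : F t = ((w + h t) * Real.cos t - h' t * Real.sin t) *
        ((w + h t) * ((w + h t) + h'' t)) := rfl
    rw [hFT, hx t, hy t, hx'eq t ht, hy'eq t ht]
    linear_combination (((w + h t) * Real.cos t - h' t * Real.sin t) * (w + h t) *
      ((w + h t) + h'' t)) * Real.sin_sq_add_cos_sq t
  have huIcc : uIcc (-(π/2)) (π/2) = I := uIcc_of_le (by linarith)
  have hsub0 : Icc (0:ℝ) (π/2) ⊆ I := by rw [hIdef]; exact Icc_subset_Icc (by linarith) le_rfl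
  -- continuity facts
  have hcB : ContinuousOn B I := by
    apply ContinuousOn.sub
    · exact ((((continuousOn_const.add hch).pow 2).mul hch').mul
        Real.continuous_cos.continuousOn)
    · exact (((continuousOn_const.mul (continuousOn_const.add hch)).mul (hch'.pow 2)).mul
        Real.continuous_sin.continuousOn)
  have hcBd : ContinuousOn Bd I := by
    refine (ContinuousOn.sub (ContinuousOn.sub (ContinuousOn.sub (ContinuousOn.add ?_ ?_) ?_) ?_) ?_)
    · exact ((continuousOn_const.mul (continuousOn_const.add hch)).mul (hch'.pow 2)).mul
        Real.continuous_cos.continuousOn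
    · exact (((continuousOn_const.add hch).pow 2).mul hh''cont).mul
        Real.continuous_cos.continuousOn
    · exact (((continuousOn_const.add hch).pow 2).mul hch').mul
        Real.continuous_sin.continuousOn
    · exact (continuousOn_const.mul (hch'.pow 3)).mul Real.continuous_sin.continuousOn
    · exact (((continuousOn_const.add hch).mul hch').mul hh''cont).mul
        Real.continuous_sin.continuousOn
  have hcG : ContinuousOn G I := by
    refine (ContinuousOn.add (ContinuousOn.sub ?_ ?_) ?_)
    · exact ((continuousOn_const.add hch).pow 3).mul Real.continuous_cos.continuousOn
    · exact ((continuousOn_const.mul (continuousOn_const.add hch)).mul (hch'.pow 2)).mul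
        Real.continuous_cos.continuousOn
    · exact (continuousOn_const.mul (hch'.pow 3)).mul Real.continuous_sin.continuousOn
  -- FTC for Bd
  have hBa : B (π/2) = 0 := by simp [hBdef, Real.cos_pi_div_two, hbc]
  have hBna : B (-(π/2)) = 0 := by
    simp [hBdef, hbc', Real.cos_neg, Real.cos_pi_div_two]
  have hBdint : IntervalIntegrable Bd volume (-(π/2)) (π/2) :=
    (hcBd.mono huIcc.subset).intervalIntegrable
  have hGintI : IntervalIntegrable G volume (-(π/2)) (π/2) :=
    (hcG.mono huIcc.subset).intervalIntegrable
  have hintBd : ∫ t in (-(π/2))..(π/2), Bd t = 0 := by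
    have hder : ∀ t ∈ Ioo (-(π/2)) (π/2), HasDerivWithinAt B (Bd t) (Ioi t) t := by
      intro t ht
      have htI : t ∈ I := Ioo_subset_Icc_self ht
      have hnh : I ∈ nhds t := by rw [hIdef]; exact Icc_mem_nhds ht.1 ht.2
      have dh : HasDerivAt h (h' t) t := (hh t htI).hasDerivAt hnh
      have dh' : HasDerivAt h' (h'' t) t := (hh' t htI).hasDerivAt hnh
      have dB : HasDerivAt B (Bd t) t := by
        have base := ((((dh.const_add w).pow 2).mul dh').mul (Real.hasDerivAt_cos t)).sub
          ((((dh.const_add w).const_mul ((1:ℝ)/2)).mul (dh'.pow 2)).mul (Real.hasDerivAt_sin t))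
        refine base.congr_deriv ?_
        simp only [hBddef]
        push_cast
        simp only [Pi.mul_apply, Pi.pow_apply]
        ring
      exact dB.hasDerivWithinAt
    rw [intervalIntegral.integral_eq_sub_of_hasDeriv_right_of_le (by linarith)
      hcB hder hBdint, hBa, hBna, sub_zero]
  -- split F = Bd + G
  have hFsplit : ∫ t in (-(π/2))..(π/2), F t
      = (∫ t in (-(π/2))..(π/2), Bd t) + ∫ t in (-(π/2))..(π/2), G t := by
    rw [← intervalIntegral.integral_add hBdint hGintI]
    refine intervalIntegral.integral_congr fun t _ => ?_
    show F t = Bd t + G t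
    simp only [hFdef, hBddef, hGdef]
    ring
  -- parity
  have hsubneg : Icc (-(π/2)) (0:ℝ) ⊆ I := by
    rw [hIdef]; exact Icc_subset_Icc le_rfl (by linarith)
  have hGint1 : IntervalIntegrable G volume (-(π/2)) 0 :=
    ((hcG.mono hsubneg).mono (uIcc_of_le (by linarith : -(π/2) ≤ (0:ℝ))).subset).intervalIntegrable
  have hGint2 : IntervalIntegrable G volume 0 (π/2) :=
    ((hcG.mono hsub0).mono (uIcc_of_le hpi.le).subset).intervalIntegrable
  have hcGneg : ContinuousOn (fun t => G (-t)) (Icc (0:ℝ) (π/2)) := by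
    refine hcG.comp (continuous_neg.continuousOn) ?_
    intro t ht
    exact hmemneg t (hsub0 ht)
  have hGnegint : IntervalIntegrable (fun t => G (-t)) volume 0 (π/2) :=
    (hcGneg.mono (uIcc_of_le hpi.le).subset).intervalIntegrable
  have hGsplit : ∫ t in (-(π/2))..(π/2), G t
      = (∫ t in (-(π/2))..(0:ℝ), G t) + ∫ t in (0:ℝ)..(π/2), G t :=
    (intervalIntegral.integral_add_adjacent_intervals hGint1 hGint2).symm
  have hGleft : ∫ t in (-(π/2))..(0:ℝ), G t = ∫ t in (0:ℝ)..(π/2), G (-t) := by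
    have e := intervalIntegral.integral_comp_neg (a := (0:ℝ)) (b := π/2) (f := G)
    set_option linter.unnecessarySimpa false in
    simpa using e.symm
  have hGcomb : (∫ t in (0:ℝ)..(π/2), G (-t)) + (∫ t in (0:ℝ)..(π/2), G t)
      = ∫ t in (0:ℝ)..(π/2),
          (2*w^3*Real.cos t + 6*w*(h t^2*Real.cos t) - 3*w*(h' t^2*Real.cos t)) := by
    rw [← intervalIntegral.integral_add hGnegint hGint2]
    refine intervalIntegral.integral_congr fun t ht => ?_
    rw [uIcc_of_le hpi.le] at ht
    have htI : t ∈ I := hsub0 ht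
    show G (-t) + G t = _
    simp only [hGdef]
    rw [hodd t htI, heven t htI, Real.cos_neg, Real.sin_neg]
    ring
  -- final integral computations
  have hintcos : ∫ t in (0:ℝ)..(π/2), Real.cos t = 1 := by
    rw [integral_cos]; simp
  have hcosint : IntervalIntegrable Real.cos volume 0 (π/2) :=
    Real.continuous_cos.intervalIntegrable _ _
  have hAint : IntervalIntegrable (fun t => h t^2 * Real.cos t) volume 0 (π/2) :=
    ((((hch.mono hsub0).pow 2).mul Real.continuous_cos.continuousOn).mono
      (uIcc_of_le hpi.le).subset).intervalIntegrable
  have hBint : IntervalIntegrable (fun t => h' t^2 * Real.cos t) volume 0 (π/2) :=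
    ((((hch'.mono hsub0).pow 2).mul Real.continuous_cos.continuousOn).mono
      (uIcc_of_le hpi.le).subset).intervalIntegrable
  have hGval : ∫ t in (0:ℝ)..(π/2),
      (2*w^3*Real.cos t + 6*w*(h t^2*Real.cos t) - 3*w*(h' t^2*Real.cos t))
      = 2*w^3 + 6*w*(∫ t in (0:ℝ)..(π/2), h t^2 * Real.cos t)
        - 3*w*(∫ t in (0:ℝ)..(π/2), h' t^2 * Real.cos t) := by
    rw [intervalIntegral.integral_sub ((hcosint.const_mul _).add (hAint.const_mul _))
        (hBint.const_mul _),
      intervalIntegral.integral_add (hcosint.const_mul _) (hAint.const_mul _),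
      intervalIntegral.integral_const_mul, intervalIntegral.integral_const_mul,
      intervalIntegral.integral_const_mul, hintcos]
    ring
  have hRHS : ∫ t in (0:ℝ)..(π/2), (h t ^ 2 - (1/2) * h' t ^ 2) * Real.cos t
      = (∫ t in (0:ℝ)..(π/2), h t^2 * Real.cos t)
        - (1/2) * ∫ t in (0:ℝ)..(π/2), h' t^2 * Real.cos t := by
    have e : (∫ t in (0:ℝ)..(π/2), (h t ^ 2 - (1/2) * h' t ^ 2) * Real.cos t)
        = ∫ t in (0:ℝ)..(π/2), (h t^2*Real.cos t - (1/2)*(h' t^2*Real.cos t)) :=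
      intervalIntegral.integral_congr (fun t _ => by ring)
    rw [e, intervalIntegral.integral_sub hAint (hBint.const_mul _),
      intervalIntegral.integral_const_mul]
  rw [hIeq, hFsplit, hintBd, zero_add, hGsplit, hGleft, hGcomb, hGval, hRHS]
  ring
end

section
/- Let h : [−π/2, π/2] → ℝ be twice continuously differentiable, odd (h(−t) = −h(t) for all t), with h'(π/2) = 0. Then ∫_{−π/2}^{π/2} ( 2 h''(t) h(t) cos t − h''(t) h'(t) sin t + 3 h(t)² cos t − 2 h(t) h'(t) sin t ) dt = ∫₀^{π/2} ( 6 h(t)² − 3 h'(t)² ) cos t dt. -/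
open Real Set


/-- If `h : [−π/2, π/2] → ℝ` is twice continuously differentiable, odd, with
`h' (π/2) = 0`, then
`∫_{−π/2}^{π/2} (2 h'' h cos t − h'' h' sin t + 3 h² cos t − 2 h h' sin t) dt
  = ∫₀^{π/2} (6 h² − 3 h'²) cos t dt`. -/
theorem integral_reduction (h h' h'' : ℝ → ℝ)
    (hh : ∀ t ∈ Icc (-(π/2)) (π/2), HasDerivWithinAt h (h' t) (Icc (-(π/2)) (π/2)) t)
    (hh' : ∀ t ∈ Icc (-(π/2)) (π/2), HasDerivWithinAt h' (h'' t) (Icc (-(π/2)) (π/2)) t)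
    (hcont : ContinuousOn h'' (Icc (-(π/2)) (π/2)))
    (hodd : ∀ t ∈ Icc (-(π/2)) (π/2), h (-t) = - h t)
    (hbc : h' (π/2) = 0) :
    ∫ t in (-(π/2))..(π/2),
        (2 * h'' t * h t * Real.cos t - h'' t * h' t * Real.sin t
          + 3 * h t ^ 2 * Real.cos t - 2 * h t * h' t * Real.sin t)
      = ∫ t in (0:ℝ)..(π/2), (6 * h t ^ 2 - 3 * h' t ^ 2) * Real.cos t := by
  have hπ : (0:ℝ) < π/2 := by positivity
  set I := Icc (-(π/2)) (π/2) with hI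
  have hlt : -(π/2) < π/2 := by linarith
  have hsym : ∀ t ∈ I, -t ∈ I := by
    rintro t ⟨h1, h2⟩; exact ⟨by linarith, by linarith⟩
  have hmapsTo : MapsTo (fun u : ℝ => -u) I I := fun u hu => hsym u hu
  -- h' is even on I
  have heven : ∀ t ∈ I, h' (-t) = h' t := by
    intro t ht
    have hnt := hsym t ht
    have d1 : HasDerivWithinAt (fun u => h (-u)) (h' (-t) * (-1)) I t :=
      HasDerivWithinAt.comp t (hh (-t) hnt) (hasDerivAt_neg t).hasDerivWithinAt hmapsTo
    have d2 : HasDerivWithinAt (fun u => -h (-u)) (h' (-t)) I t := by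
      exact (by simpa using d1.neg : HasDerivWithinAt (-fun u => h (-u)) (h' (-t)) I t)
    have d3 : HasDerivWithinAt h (h' (-t)) I t := by
      refine d2.congr (fun u hu => ?_) ?_
      · rw [hodd u hu]; ring
      · rw [hodd t ht]; ring
    have hu : UniqueDiffWithinAt ℝ I t := (uniqueDiffOn_Icc hlt) t ht
    rw [← d3.derivWithin hu, (hh t ht).derivWithin hu]
  have hbc' : h' (-(π/2)) = 0 := by
    rw [heven (π/2) ⟨le_of_lt hlt, le_refl _⟩, hbc]
  -- continuity
  have hc : ContinuousOn h I := fun t ht => (hh t ht).continuousWithinAt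
  have hc' : ContinuousOn h' I := fun t ht => (hh' t ht).continuousWithinAt
  set G : ℝ → ℝ := fun t => (3 * h t ^ 2 - (3/2) * h' t ^ 2) * Real.cos t with hG
  set F : ℝ → ℝ := fun t => 2 * h t * h' t * Real.cos t - (1/2) * (h' t)^2 * Real.sin t with hF
  set E : ℝ → ℝ := fun t =>
      (2 * h'' t * h t * Real.cos t - h'' t * h' t * Real.sin t
        + 3 * h t ^ 2 * Real.cos t - 2 * h t * h' t * Real.sin t) - G t with hE
  have hGc : ContinuousOn G I := by
    apply ContinuousOn.mul
    · exact ((continuousOn_const.mul (hc.pow 2)).sub (continuousOn_const.mul (hc'.pow 2)))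
    · exact Real.continuous_cos.continuousOn
  have hEc : ContinuousOn E I := by
    apply ContinuousOn.sub _ hGc
    apply ContinuousOn.sub
    apply ContinuousOn.add
    apply ContinuousOn.sub
    · exact ((continuousOn_const.mul hcont).mul hc).mul Real.continuous_cos.continuousOn
    · exact (hcont.mul hc').mul Real.continuous_sin.continuousOn
    · exact (continuousOn_const.mul (hc.pow 2)).mul Real.continuous_cos.continuousOn
    · exact ((continuousOn_const.mul hc).mul hc').mul Real.continuous_sin.continuousOn
  have hIeq : uIcc (-(π/2)) (π/2) = I := by rw [hI, uIcc_of_le (le_of_lt hlt)]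
  have hGint : IntervalIntegrable G MeasureTheory.volume (-(π/2)) (π/2) := by
    apply ContinuousOn.intervalIntegrable; rwa [hIeq]
  have hEint : IntervalIntegrable E MeasureTheory.volume (-(π/2)) (π/2) := by
    apply ContinuousOn.intervalIntegrable; rwa [hIeq]
  -- derivative of F at interior points
  have hFd : ∀ t ∈ Ioo (-(π/2)) (π/2), HasDerivWithinAt F (E t) (Ioi t) t := by
    intro t ht
    have hmem : I ∈ nhds t := by rw [hI]; exact Icc_mem_nhds ht.1 ht.2
    have dh : HasDerivAt h (h' t) t := (hh t (Ioo_subset_Icc_self ht)).hasDerivAt hmem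
    have dh' : HasDerivAt h' (h'' t) t := (hh' t (Ioo_subset_Icc_self ht)).hasDerivAt hmem
    have dF : HasDerivAt F (E t) t := by
      have d1 : HasDerivAt (fun u => 2 * h u * h' u * Real.cos u)
          ((2 * h' t * h' t + 2 * h t * h'' t) * Real.cos t
            + 2 * h t * h' t * (-Real.sin t)) t := by
        exact (((hasDerivAt_const t (2:ℝ)).mul dh).mul dh').mul (Real.hasDerivAt_cos t)
          |>.congr_deriv (by simp only [Pi.mul_apply, Pi.pow_apply]; ring)
      have d2 : HasDerivAt (fun u => (1/2) * (h' u)^2 * Real.sin u)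
          ((1/2) * (2 * h' t * h'' t) * Real.sin t
            + (1/2) * (h' t)^2 * Real.cos t) t := by
        exact ((hasDerivAt_const t ((1:ℝ)/2)).mul (dh'.pow 2)).mul (Real.hasDerivAt_sin t)
          |>.congr_deriv (by simp only [Pi.mul_apply, Pi.pow_apply]; ring)
      exact (d1.sub d2).congr_deriv (by simp only [hE, hG]; ring)
    exact dF.hasDerivWithinAt
  have hFc : ContinuousOn F I := by
    apply ContinuousOn.sub
    · exact ((continuousOn_const.mul hc).mul hc').mul Real.continuous_cos.continuousOn
    · exact (continuousOn_const.mul (hc'.pow 2)).mul Real.continuous_sin.continuousOn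
  have hEzero : (∫ t in (-(π/2))..(π/2), E t) = 0 := by
    rw [intervalIntegral.integral_eq_sub_of_hasDeriv_right_of_le (le_of_lt hlt)
      (by rwa [← hI]) hFd hEint]
    simp [hF, hbc, hbc', Real.cos_pi_div_two]
  -- split LHS
  have hsplit : (∫ t in (-(π/2))..(π/2),
        (2 * h'' t * h t * Real.cos t - h'' t * h' t * Real.sin t
          + 3 * h t ^ 2 * Real.cos t - 2 * h t * h' t * Real.sin t))
      = ∫ t in (-(π/2))..(π/2), G t := by
    have : (∫ t in (-(π/2))..(π/2),
        (2 * h'' t * h t * Real.cos t - h'' t * h' t * Real.sin t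
          + 3 * h t ^ 2 * Real.cos t - 2 * h t * h' t * Real.sin t))
        = ∫ t in (-(π/2))..(π/2), (E t + G t) := by
      apply intervalIntegral.integral_congr
      intro t _; simp [hE]
    rw [this, intervalIntegral.integral_add hEint hGint, hEzero, zero_add]
  rw [hsplit]
  -- parity
  have hI0 : Icc (0:ℝ) (π/2) ⊆ I := by
    rw [hI]; exact Icc_subset_Icc (by linarith) le_rfl
  have hGeven : ∀ t ∈ Icc (0:ℝ) (π/2), G (-t) = G t := by
    intro t ht
    have ht' : t ∈ I := hI0 ht
    simp only [hG, hodd t ht', heven t ht', Real.cos_neg]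
    ring
  have hGint01 : IntervalIntegrable G MeasureTheory.volume 0 (π/2) := by
    apply ContinuousOn.intervalIntegrable
    apply hGc.mono
    rw [uIcc_of_le hπ.le]
    exact hI0
  have hGintneg : IntervalIntegrable G MeasureTheory.volume (-(π/2)) 0 := by
    apply ContinuousOn.intervalIntegrable
    apply hGc.mono
    rw [uIcc_of_le (by linarith : -(π/2) ≤ (0:ℝ)), hI]
    exact Icc_subset_Icc le_rfl hπ.le
  have hGneg : (∫ t in (-(π/2))..(0:ℝ), G t) = ∫ t in (0:ℝ)..(π/2), G t := by
    have hcn := intervalIntegral.integral_comp_neg (a := (0:ℝ)) (b := π/2) (f := G)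
    rw [neg_zero] at hcn
    rw [← hcn]
    apply intervalIntegral.integral_congr
    intro t ht
    rw [uIcc_of_le hπ.le] at ht
    exact hGeven t ht
  have hadj : (∫ t in (-(π/2))..(π/2), G t)
      = (∫ t in (-(π/2))..(0:ℝ), G t) + ∫ t in (0:ℝ)..(π/2), G t :=
    (intervalIntegral.integral_add_adjacent_intervals hGintneg hGint01).symm
  rw [hadj, hGneg, ← two_mul, ← intervalIntegral.integral_const_mul]
  apply intervalIntegral.integral_congr
  intro t _
  simp only [hG]; ring
end

section
/- Let h ∈ E and let w ∈ ℝ satisfy w > 0 and w ≥ w₀(h). Suppose that for every h̃ ∈ E and every w̃ > 0 with w̃ ≥ w₀(h̃) one has 1 + 3F(h)/w² ≤ 1 + 3F(h̃)/w̃². Then w = w₀(h). -/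
open Real MeasureTheory Set

/-- `F(h) = ∫₀^{π/2} (h² − (1/2) h'²) cos t dt`. -/
noncomputable def Ffun (h h' : ℝ → ℝ) : ℝ :=
  ∫ t in (0:ℝ)..(π/2), (h t ^ 2 - (1/2) * h' t ^ 2) * Real.cos t

/-- `w₀(h) = ess sup_{t ∈ (0, π/2)} |h t + h'' t|`, where `h''` is the (a.e. defined)
second derivative of `h`. -/
noncomputable def w0 (h h'' : ℝ → ℝ) : ℝ :=
  essSup (fun t => |h t + h'' t|) (volume.restrict (Ioo (0:ℝ) (π/2)))

/-! ### Auxiliary lemmas for the test function `g t = cos (2t) - 1` -/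

lemma aux_sin_lip (a b : ℝ) : |Real.sin a - Real.sin b| ≤ |a - b| := by
  rw [Real.sin_sub_sin, abs_mul, abs_mul]
  have h1 := Real.abs_sin_le_abs (x := (a-b)/2)
  have h2 := Real.abs_cos_le_one ((a+b)/2)
  have h3 : |(2:ℝ)| = 2 := by norm_num
  rw [h3]
  calc 2 * |Real.sin ((a-b)/2)| * |Real.cos ((a+b)/2)| ≤ 2 * |(a-b)/2| * 1 := by
        apply mul_le_mul _ h2 (abs_nonneg _) (by positivity)
        nlinarith [abs_nonneg (Real.sin ((a-b)/2))]
    _ = |a - b| := by rw [abs_div]; simp; ring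

lemma aux_g_hasDerivAt (t : ℝ) :
    HasDerivAt (fun t => Real.cos (2*t) - 1) (-2 * Real.sin (2*t)) t := by
  have h1 : HasDerivAt (fun t : ℝ => 2*t) 2 t := by simpa using (hasDerivAt_id t).const_mul 2
  have h2 := (Real.hasDerivAt_cos (2*t)).comp t h1
  have h3 := h2.sub_const 1
  exact h3.congr_deriv (by ring)

lemma aux_g'_hasDerivAt (t : ℝ) :
    HasDerivAt (fun t => -2 * Real.sin (2*t)) (-4 * Real.cos (2*t)) t := by
  have h1 : HasDerivAt (fun t : ℝ => 2*t) 2 t := by simpa using (hasDerivAt_id t).const_mul 2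
  have h2 := ((Real.hasDerivAt_sin (2*t)).comp t h1).const_mul (-2)
  exact h2.congr_deriv (by ring)

lemma aux_g'_lip : LipschitzWith 4 (fun t => -2 * Real.sin (2*t)) := by
  apply LipschitzWith.of_dist_le_mul
  intro x y
  rw [Real.dist_eq, Real.dist_eq]
  have := aux_sin_lip (2*x) (2*y)
  have h1 : |-2 * Real.sin (2*x) - -2 * Real.sin (2*y)|
      = 2 * |Real.sin (2*x) - Real.sin (2*y)| := by
    rw [show (-2 * Real.sin (2*x) - -2 * Real.sin (2*y))
        = (-2) * (Real.sin (2*x) - Real.sin (2*y)) by ring, abs_mul]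
    norm_num
  have h2 : |2*x - 2*y| = 2 * |x - y| := by
    rw [show (2*x - 2*y) = 2*(x-y) by ring, abs_mul]; norm_num
  rw [h1]
  push_cast
  nlinarith [this, h2]

lemma aux_antideriv (t : ℝ) :
    HasDerivAt (fun t => (12/5)*(Real.sin t)^5 - (8/3)*(Real.sin t)^3)
      (((Real.cos (2*t) - 1)^2 - (1/2) * (-2 * Real.sin (2*t))^2) * Real.cos t) t := by
  have h1 := Real.hasDerivAt_sin t
  have h2 := ((h1.pow 5).const_mul (12/5 : ℝ)).sub ((h1.pow 3).const_mul (8/3 : ℝ))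
  refine h2.congr_deriv ?_
  symm
  rw [Real.cos_two_mul, Real.sin_two_mul]
  have hsc := Real.sin_sq_add_cos_sq t
  push_cast
  linear_combination (Real.cos t * (4*Real.cos t^2 - 4 - 12*Real.sin t^2)) * hsc

lemma aux_Ffun_g :
    Ffun (fun t => Real.cos (2*t) - 1) (fun t => -2 * Real.sin (2*t)) = -(4/15) := by
  unfold Ffun
  rw [intervalIntegral.integral_eq_sub_of_hasDerivAt
      (f := fun t => (12/5)*(Real.sin t)^5 - (8/3)*(Real.sin t)^3)
      (fun t _ => aux_antideriv t)
      (by apply Continuous.intervalIntegrable; fun_prop)]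
  simp [Real.sin_pi_div_two]
  norm_num

lemma aux_measure_ne_zero : (volume.restrict (Ioo (0:ℝ) (π/2))) ≠ 0 := by
  intro hc
  rw [Measure.restrict_eq_zero, Real.volume_Ioo] at hc
  simp at hc
  linarith [Real.pi_pos]

lemma aux_w0_g_le :
    w0 (fun t => Real.cos (2*t) - 1) (fun t => -4 * Real.cos (2*t)) ≤ 4 := by
  unfold w0
  have hne : (MeasureTheory.ae (volume.restrict (Ioo (0:ℝ) (π/2)))).NeBot :=
    ae_neBot.mpr aux_measure_ne_zero
  apply Filter.limsup_le_of_le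
  · exact Filter.isCoboundedUnder_le_of_le _ (fun t => abs_nonneg _)
  · apply Filter.Eventually.of_forall
    intro t
    have h1 : Real.cos (2*t) - 1 + -4 * Real.cos (2*t) = -(3 * Real.cos (2*t) + 1) := by ring
    rw [h1, abs_neg]
    have := Real.neg_one_le_cos (2*t)
    have := Real.cos_le_one (2*t)
    rw [abs_le]; constructor <;> nlinarith

/-- Corollary 1: if `(h, w)` with `h ∈ E`, `w > 0`, `w ≥ w₀(h)` minimizes the ratio
`I(h, w) = 1 + 3 F(h)/w²` among all such pairs, then `w = w₀(h)`. -/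
theorem minimizer_has_w_eq_w0 (h h' h'' : ℝ → ℝ) (hE : MemE h h')
    (hsecond : ∀ᵐ t ∂(volume.restrict (Ioo (0:ℝ) (π/2))), HasDerivAt h' (h'' t) t)
    (w : ℝ) (hw : 0 < w) (hww0 : w0 h h'' ≤ w)
    (hmin : ∀ (g g' g'' : ℝ → ℝ) (w' : ℝ), MemE g g' →
      (∀ᵐ t ∂(volume.restrict (Ioo (0:ℝ) (π/2))), HasDerivAt g' (g'' t) t) →
      0 < w' → w0 g g'' ≤ w' →
      1 + 3 * Ffun h h' / w ^ 2 ≤ 1 + 3 * Ffun g g' / w' ^ 2) :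
    w = w0 h h'' := by
  -- The test function g
  set g : ℝ → ℝ := fun t => Real.cos (2*t) - 1 with hg
  set g' : ℝ → ℝ := fun t => -2 * Real.sin (2*t) with hg'
  set g'' : ℝ → ℝ := fun t => -4 * Real.cos (2*t) with hg''
  have hgE : MemE g g' := by
    refine ⟨fun t _ => (aux_g_hasDerivAt t).hasDerivWithinAt, ⟨4, aux_g'_lip.lipschitzOnWith⟩,
      by simp [hg], ?_⟩
    have h2pi : (2:ℝ)*(π/2) = π := by ring
    simp [hg', h2pi]
  have hgsec : ∀ᵐ t ∂(volume.restrict (Ioo (0:ℝ) (π/2))), HasDerivAt g' (g'' t) t :=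
    Filter.Eventually.of_forall (fun t => aux_g'_hasDerivAt t)
  -- Comparing with g shows F(h) < 0
  have hcomp := hmin g g' g'' 4 hgE hgsec (by norm_num) aux_w0_g_le
  rw [aux_Ffun_g] at hcomp
  have hFneg : Ffun h h' < 0 := by
    by_contra hF
    push_neg at hF
    have h1 : (0:ℝ) ≤ 3 * Ffun h h' / w ^ 2 := by positivity
    nlinarith
  -- Now suppose w > w0
  rcases lt_or_eq_of_le hww0 with hlt | heq
  · exfalso
    set w' : ℝ := max (w0 h h'') (w/2) with hw'
    have hw'pos : 0 < w' := lt_max_of_lt_right (by linarith)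
    have hw'ge : w0 h h'' ≤ w' := le_max_left _ _
    have hw'lt : w' < w := max_lt hlt (by linarith)
    have hcomp2 := hmin h h' h'' w' hE hsecond hw'pos hw'ge
    have h2 : 3 * Ffun h h' / w ^ 2 ≤ 3 * Ffun h h' / w' ^ 2 := by linarith
    rw [div_le_div_iff₀ (by positivity) (by positivity)] at h2
    have hsq : w' ^ 2 < w ^ 2 := by nlinarith
    nlinarith [hsq, hFneg, h2]
  · exact heq.symm
end

section
/- Let 0 < t₁ < π/2 and let A₀, B₀, A₁, B₁ be real constants. Suppose the function h : [0, π/2] → ℝ defined by h(t) = A₀ cos t + B₀ sin t + 1 for t ∈ [0, t₁] and h(t) = A₁ cos t + B₁ sin t − 1 for t ∈ [t₁, π/2] is continuously differentiable and satisfies h(0) = 0 and h'(π/2) = 0. Then A₀ = −1, A₁ = 0, and t₁ = π/3. -/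
open Real Set

/-- Case of one interior discontinuity: if `h` is piecewise
`A₀ cos t + B₀ sin t + 1` on `[0, t₁]` and `A₁ cos t + B₁ sin t − 1` on `[t₁, π/2]`,
is (continuously) differentiable on `[0, π/2]` and satisfies `h 0 = 0` and
`h' (π/2) = 0`, then `A₀ = −1`, `A₁ = 0` and `t₁ = π/3`. -/
theorem one_discontinuity_is_reuleaux (t₁ A₀ B₀ A₁ B₁ : ℝ)
    (ht₁ : t₁ ∈ Ioo (0:ℝ) (π/2)) (h h' : ℝ → ℝ)
    (hpiece₀ : ∀ t ∈ Icc (0:ℝ) t₁, h t = A₀ * Real.cos t + B₀ * Real.sin t + 1)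
    (hpiece₁ : ∀ t ∈ Icc t₁ (π/2), h t = A₁ * Real.cos t + B₁ * Real.sin t - 1)
    (hderiv : ∀ t ∈ Icc (0:ℝ) (π/2), HasDerivWithinAt h (h' t) (Icc (0:ℝ) (π/2)) t)
    (h0 : h 0 = 0) (hbc : h' (π/2) = 0) :
    A₀ = -1 ∧ A₁ = 0 ∧ t₁ = π/3 := by
  obtain ⟨ht0, htπ⟩ := ht₁
  have hπ : (0:ℝ) < π/2 := by positivity
  -- A₀ = -1
  have hA₀ : A₀ = -1 := by
    have := hpiece₀ 0 ⟨le_refl _, ht0.le⟩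
    rw [h0] at this
    simp at this
    linarith
  -- derivative facts for the explicit pieces
  have g₀d : ∀ t, HasDerivAt (fun t => A₀ * Real.cos t + B₀ * Real.sin t + 1)
      (A₀ * (-Real.sin t) + B₀ * Real.cos t) t := by
    intro t
    exact (((Real.hasDerivAt_cos t).const_mul A₀).add
      ((Real.hasDerivAt_sin t).const_mul B₀)).add_const 1
  have g₁d : ∀ t, HasDerivAt (fun t => A₁ * Real.cos t + B₁ * Real.sin t - 1)
      (A₁ * (-Real.sin t) + B₁ * Real.cos t) t := by
    intro t
    exact (((Real.hasDerivAt_cos t).const_mul A₁).add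
      ((Real.hasDerivAt_sin t).const_mul B₁)).sub_const 1
  -- subsets
  have hsub₀ : Icc (0:ℝ) t₁ ⊆ Icc (0:ℝ) (π/2) := Icc_subset_Icc le_rfl htπ.le
  have hsub₁ : Icc t₁ (π/2) ⊆ Icc (0:ℝ) (π/2) := Icc_subset_Icc ht0.le le_rfl
  -- h' on the right piece: at any point of [t₁, π/2], h' t = -A₁ sin t + B₁ cos t
  have key₁ : ∀ t ∈ Icc t₁ (π/2), h' t = A₁ * (-Real.sin t) + B₁ * Real.cos t := by
    intro t ht
    have hd1 : HasDerivWithinAt (fun t => A₁ * Real.cos t + B₁ * Real.sin t - 1)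
        (h' t) (Icc t₁ (π/2)) t := by
      exact ((hderiv t (hsub₁ ht)).mono hsub₁).congr (fun x hx => (hpiece₁ x hx).symm) (hpiece₁ t ht).symm
    have hd2 : HasDerivWithinAt (fun t => A₁ * Real.cos t + B₁ * Real.sin t - 1)
        (A₁ * (-Real.sin t) + B₁ * Real.cos t) (Icc t₁ (π/2)) t :=
      (g₁d t).hasDerivWithinAt
    have hu : UniqueDiffWithinAt ℝ (Icc t₁ (π/2)) t :=
      (uniqueDiffOn_Icc htπ) t ht
    rw [← hd1.derivWithin hu, ← hd2.derivWithin hu]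
  have key₀ : h' t₁ = A₀ * (-Real.sin t₁) + B₀ * Real.cos t₁ := by
    have ht : t₁ ∈ Icc (0:ℝ) t₁ := ⟨ht0.le, le_rfl⟩
    have hd1 : HasDerivWithinAt (fun t => A₀ * Real.cos t + B₀ * Real.sin t + 1)
        (h' t₁) (Icc 0 t₁) t₁ :=
      ((hderiv t₁ (hsub₀ ht)).mono hsub₀).congr (fun x hx => (hpiece₀ x hx).symm) (hpiece₀ t₁ ht).symm
    have hd2 : HasDerivWithinAt (fun t => A₀ * Real.cos t + B₀ * Real.sin t + 1)
        (A₀ * (-Real.sin t₁) + B₀ * Real.cos t₁) (Icc 0 t₁) t₁ :=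
      (g₀d t₁).hasDerivWithinAt
    have hu : UniqueDiffWithinAt ℝ (Icc (0:ℝ) t₁) t₁ :=
      (uniqueDiffOn_Icc ht0) t₁ ht
    rw [← hd1.derivWithin hu, ← hd2.derivWithin hu]
  -- A₁ = 0 from h'(π/2) = 0
  have hA₁ : A₁ = 0 := by
    have := key₁ (π/2) ⟨htπ.le, le_rfl⟩
    rw [hbc, Real.sin_pi_div_two, Real.cos_pi_div_two] at this
    linarith
  -- continuity and C¹ matching at t₁
  have hval : A₀ * Real.cos t₁ + B₀ * Real.sin t₁ + 1
      = A₁ * Real.cos t₁ + B₁ * Real.sin t₁ - 1 := by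
    rw [← hpiece₀ t₁ ⟨ht0.le, le_rfl⟩, ← hpiece₁ t₁ ⟨le_rfl, htπ.le⟩]
  have hder : A₀ * (-Real.sin t₁) + B₀ * Real.cos t₁
      = A₁ * (-Real.sin t₁) + B₁ * Real.cos t₁ := by
    rw [← key₀, key₁ t₁ ⟨le_rfl, htπ.le⟩]
  -- derive cos t₁ = 1/2
  have hcosne : Real.cos t₁ ≠ 0 := by
    have := Real.cos_pos_of_mem_Ioo ⟨by linarith, htπ⟩
    linarith
  have hsc : Real.sin t₁ ^ 2 + Real.cos t₁ ^ 2 = 1 := Real.sin_sq_add_cos_sq t₁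
  subst hA₀; rw [hA₁] at hval hder
  -- hder: sin t₁ + B₀ cos t₁ = B₁ cos t₁
  -- hval: -cos t₁ + B₀ sin t₁ + 1 = B₁ sin t₁ - 1
  have hcos : Real.cos t₁ = 1/2 := by
    have hB₁ : B₁ * Real.cos t₁ = Real.sin t₁ + B₀ * Real.cos t₁ := by linarith
    have e1 : B₁ * Real.sin t₁ = -Real.cos t₁ + B₀ * Real.sin t₁ + 2 := by linarith
    have e2 := congrArg (· * Real.sin t₁) hB₁
    have e3 := congrArg (· * Real.cos t₁) e1
    nlinarith [e2, e3, hsc]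
  have : Real.cos t₁ = Real.cos (π/3) := by rw [Real.cos_pi_div_three, hcos]
  have ht₁eq : t₁ = π/3 :=
    Real.injOn_cos ⟨ht0.le, by linarith [Real.pi_pos]⟩
      ⟨by positivity, by linarith [Real.pi_pos]⟩ this
  exact ⟨rfl, hA₁, ht₁eq⟩
end

section
/- Define h_Reul : [0, π/2] → ℝ by h_Reul(t) = 1 − cos t for t ∈ [0, π/3] and h_Reul(t) = √3 sin t − 1 for t ∈ [π/3, π/2]. Then h_Reul ∈ E, ∫₀^{π/2} ( h_Reul(t)² − (1/2) h_Reul'(t)² ) cos t dt = 1 − π/3, and w₀(h_Reul) = 1; consequently 1 + 3F(h_Reul)/w₀(h_Reul)² = 4 − π. -/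
open Real MeasureTheory Set

/-- The function corresponding to the rotated Reuleaux triangle. -/
noncomputable def hReul : ℝ → ℝ := fun t =>
  if t ≤ π/3 then 1 - Real.cos t else Real.sqrt 3 * Real.sin t - 1

/-- The derivative of `hReul`. -/
noncomputable def hReul' : ℝ → ℝ := fun t =>
  if t ≤ π/3 then Real.sin t else Real.sqrt 3 * Real.cos t

/-- The (a.e. defined) second derivative of `hReul`. -/
noncomputable def hReul'' : ℝ → ℝ := fun t =>
  if t ≤ π/3 then Real.cos t else -(Real.sqrt 3 * Real.sin t)

lemma sqrt3_sq : Real.sqrt 3 ^ 2 = 3 := Real.sq_sqrt (by norm_num)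
lemma pi3_lt_pi2 : π/3 < π/2 := by linarith [Real.pi_pos]
lemma junction_val : 1 - Real.cos (π/3) = Real.sqrt 3 * Real.sin (π/3) - 1 := by
  rw [Real.cos_pi_div_three, Real.sin_pi_div_three]
  linear_combination (-1/2 : ℝ) * sqrt3_sq
lemma junction_der : Real.sin (π/3) = Real.sqrt 3 * Real.cos (π/3) := by
  rw [Real.cos_pi_div_three, Real.sin_pi_div_three]; ring
lemma hasDerivAt_f1 (t : ℝ) : HasDerivAt (fun s => 1 - Real.cos s) (Real.sin t) t := by
  simpa using (Real.hasDerivAt_cos t).const_sub 1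
lemma hasDerivAt_f2 (t : ℝ) :
    HasDerivAt (fun s => Real.sqrt 3 * Real.sin s - 1) (Real.sqrt 3 * Real.cos t) t :=
  ((Real.hasDerivAt_sin t).const_mul (Real.sqrt 3)).sub_const 1
lemma hReul_hasDerivAt (t : ℝ) : HasDerivAt hReul (hReul' t) t := by
  rcases lt_trichotomy t (π/3) with h | h | h
  · have he : hReul =ᶠ[nhds t] (fun s => 1 - Real.cos s) := by
      filter_upwards [Iio_mem_nhds h] with s hs
      simp [hReul, le_of_lt (mem_Iio.mp hs)]
    simpa [hReul', h.le] using (hasDerivAt_f1 t).congr_of_eventuallyEq he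
  · subst h
    have hIic : HasDerivWithinAt hReul (Real.sin (π/3)) (Iic (π/3)) (π/3) :=
      (hasDerivAt_f1 _).hasDerivWithinAt.congr
        (fun s hs => by simp [hReul, (mem_Iic.mp hs)]) (by simp [hReul])
    have hIci : HasDerivWithinAt hReul (Real.sin (π/3)) (Ici (π/3)) (π/3) := by
      rw [junction_der]
      refine (hasDerivAt_f2 _).hasDerivWithinAt.congr (fun s hs => ?_) ?_
      · rcases eq_or_lt_of_le (mem_Ici.mp hs) with rfl | hlt
        · simp only [hReul, le_refl, if_pos]
          exact junction_val
        · simp [hReul, not_le.mpr hlt]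
      · simp only [hReul, le_refl, if_pos]
        exact junction_val
    have := hIic.union hIci
    rw [Iic_union_Ici] at this
    simpa [hReul'] using this.hasDerivAt (by simp)
  · have he : hReul =ᶠ[nhds t] (fun s => Real.sqrt 3 * Real.sin s - 1) := by
      filter_upwards [Ioi_mem_nhds h] with s hs
      simp [hReul, not_le.mpr (mem_Ioi.mp hs)]
    simpa [hReul', not_le.mpr h] using (hasDerivAt_f2 t).congr_of_eventuallyEq he
lemma hReul'_hasDerivAt {t : ℝ} (ht : t ≠ π/3) : HasDerivAt hReul' (hReul'' t) t := by
  rcases lt_or_gt_of_ne ht with h | h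
  · have he : hReul' =ᶠ[nhds t] Real.sin := by
      filter_upwards [Iio_mem_nhds h] with s hs
      simp [hReul', le_of_lt (mem_Iio.mp hs)]
    simpa [hReul'', h.le] using (Real.hasDerivAt_sin t).congr_of_eventuallyEq he
  · have he : hReul' =ᶠ[nhds t] (fun s => Real.sqrt 3 * Real.cos s) := by
      filter_upwards [Ioi_mem_nhds h] with s hs
      simp [hReul', not_le.mpr (mem_Ioi.mp hs)]
    have h2 : HasDerivAt (fun s => Real.sqrt 3 * Real.cos s)
        (-(Real.sqrt 3 * Real.sin t)) t := by
      simpa [mul_comm, neg_mul, mul_neg] using (Real.hasDerivAt_cos t).const_mul (Real.sqrt 3)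
    simpa [hReul'', not_le.mpr h] using h2.congr_of_eventuallyEq he
lemma hReul_continuous : Continuous hReul :=
  (continuous_iff_continuousAt).mpr fun t => (hReul_hasDerivAt t).continuousAt
lemma hReul'_continuous : Continuous hReul' := by
  refine Continuous.if_le Real.continuous_sin
    (continuous_const.mul Real.continuous_cos) continuous_id continuous_const ?_
  intro x hx
  rw [hx]; exact junction_der
lemma cos_shift (t : ℝ) :
    Real.sqrt 3 * Real.cos t - Real.sin t = 2 * Real.cos (t + π/6) := by
  rw [Real.cos_add, Real.cos_pi_div_six, Real.sin_pi_div_six]; ring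
lemma hReul'_eq_min {t : ℝ} (ht : t ∈ Icc (0:ℝ) (π/2)) :
    hReul' t = min (Real.sin t) (Real.sqrt 3 * Real.cos t) := by
  obtain ⟨h0, h2⟩ := ht
  have key := cos_shift t
  by_cases hle : t ≤ π/3
  · have hc : 0 ≤ Real.cos (t + π/6) := by
      apply Real.cos_nonneg_of_mem_Icc
      constructor <;> [linarith [Real.pi_pos]; linarith]
    have : Real.sin t ≤ Real.sqrt 3 * Real.cos t := by nlinarith
    simp [hReul', hle, min_eq_left this]
  · push_neg at hle
    have hc : Real.cos (t + π/6) ≤ 0 := by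
      apply Real.cos_nonpos_of_pi_div_two_le_of_le <;> linarith [Real.pi_pos]
    have : Real.sqrt 3 * Real.cos t ≤ Real.sin t := by nlinarith
    simp [hReul', not_le.mpr hle, min_eq_right this]
lemma sqrt3_le_two : Real.sqrt 3 ≤ 2 := by
  nlinarith [sqrt3_sq, Real.sqrt_nonneg 3]
lemma hReul'_lipschitz : LipschitzOnWith 2 hReul' (Icc (0:ℝ) (π/2)) := by
  have h2 : LipschitzWith 2 (fun t => Real.sqrt 3 * Real.cos t) := by
    apply lipschitzWith_of_nnnorm_deriv_le
    · exact fun x => ((Real.hasDerivAt_cos x).const_mul (Real.sqrt 3)).differentiableAt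
    · intro x
      have hd : deriv (fun t => Real.sqrt 3 * Real.cos t) x = Real.sqrt 3 * (-Real.sin x) :=
        ((Real.hasDerivAt_cos x).const_mul (Real.sqrt 3)).deriv
      rw [← NNReal.coe_le_coe, coe_nnnorm, hd]
      push_cast
      rw [Real.norm_eq_abs, abs_mul, abs_of_nonneg (Real.sqrt_nonneg 3), abs_neg]
      nlinarith [Real.sqrt_nonneg 3, sqrt3_le_two, Real.abs_sin_le_one x,
        abs_nonneg (Real.sin x)]
  have h1 : LipschitzWith 2 Real.sin := by
    apply lipschitzWith_of_nnnorm_deriv_le Real.differentiable_sin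
    intro x
    rw [Real.deriv_sin, ← NNReal.coe_le_coe, coe_nnnorm, Real.norm_eq_abs]
    push_cast
    have := Real.abs_cos_le_one x
    linarith
  have lipmin : LipschitzWith 2 (fun t => min (Real.sin t) (Real.sqrt 3 * Real.cos t)) := by
    simpa using h1.min h2
  intro x hx y hy
  rw [hReul'_eq_min hx, hReul'_eq_min hy]
  exact lipmin x y
noncomputable def G1 : ℝ → ℝ := fun t =>
  (1/2) * Real.sin t - t - Real.sin t * Real.cos t + (3/2) * Real.sin t
    - (1/2) * Real.sin t ^ 3
noncomputable def G2 : ℝ → ℝ := fun t =>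
  (-(1/2)) * Real.sin t + (3/2) * Real.sin t ^ 3 - Real.sqrt 3 * Real.sin t ^ 2
lemma G1_deriv (t : ℝ) :
    HasDerivAt G1 (((1 - Real.cos t) ^ 2 - (1/2) * Real.sin t ^ 2) * Real.cos t) t := by
  have hs := Real.hasDerivAt_sin t
  have hc := Real.hasDerivAt_cos t
  have h := ((((hs.const_mul (1/2:ℝ)).sub (hasDerivAt_id t)).sub (hs.mul hc)).add
    (hs.const_mul (3/2:ℝ))).sub ((hs.pow 3).const_mul (1/2:ℝ))
  refine h.congr_deriv (Eq.symm ?_)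
  push_cast
  linear_combination (Real.cos t - 1) * Real.sin_sq_add_cos_sq t
lemma G2_deriv (t : ℝ) :
    HasDerivAt G2
      (((Real.sqrt 3 * Real.sin t - 1) ^ 2 - (1/2) * (Real.sqrt 3 * Real.cos t) ^ 2)
        * Real.cos t) t := by
  have hs := Real.hasDerivAt_sin t
  have h := ((hs.const_mul (-(1/2):ℝ)).add ((hs.pow 3).const_mul (3/2:ℝ))).sub
    ((hs.pow 2).const_mul (Real.sqrt 3))
  refine h.congr_deriv (Eq.symm ?_)
  push_cast
  linear_combination (-(3/2) * Real.cos t) * Real.sin_sq_add_cos_sq t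
    + (Real.sin t ^ 2 * Real.cos t - (1/2) * Real.cos t ^ 3) * sqrt3_sq
lemma Ffun_value : Ffun hReul hReul' = 1 - π/3 := by
  have hcont : Continuous (fun t => (hReul t ^ 2 - (1/2) * hReul' t ^ 2) * Real.cos t) :=
    ((hReul_continuous.pow 2).sub
      (continuous_const.mul (hReul'_continuous.pow 2))).mul Real.continuous_cos
  have hsplit := intervalIntegral.integral_add_adjacent_intervals (a := (0:ℝ)) (b := π/3)
    (c := π/2) (μ := volume) (hcont.intervalIntegrable _ _) (hcont.intervalIntegrable _ _)
  rw [Ffun, ← hsplit]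
  have e1 : EqOn (fun t => (hReul t ^ 2 - (1/2) * hReul' t ^ 2) * Real.cos t)
      (fun t => ((1 - Real.cos t) ^ 2 - (1/2) * Real.sin t ^ 2) * Real.cos t)
      (uIcc (0:ℝ) (π/3)) := by
    intro t ht
    rw [uIcc_of_le (by positivity)] at ht
    simp [hReul, hReul', ht.2]
  have e2 : EqOn (fun t => (hReul t ^ 2 - (1/2) * hReul' t ^ 2) * Real.cos t)
      (fun t => ((Real.sqrt 3 * Real.sin t - 1) ^ 2 - (1/2) * (Real.sqrt 3 * Real.cos t) ^ 2)
        * Real.cos t) (uIcc (π/3) (π/2)) := by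
    intro t ht
    rw [uIcc_of_le pi3_lt_pi2.le] at ht
    rcases eq_or_lt_of_le ht.1 with rfl | hlt
    · simp only [hReul, hReul', le_refl, if_pos]
      rw [junction_val, junction_der]
    · simp [hReul, hReul', not_le.mpr hlt]
  rw [intervalIntegral.integral_congr e1, intervalIntegral.integral_congr e2,
    intervalIntegral.integral_eq_sub_of_hasDerivAt (fun t _ => G1_deriv t)
      (((((continuous_const.sub Real.continuous_cos).pow 2).sub
        (continuous_const.mul (Real.continuous_sin.pow 2))).mul
        Real.continuous_cos).intervalIntegrable _ _),
    intervalIntegral.integral_eq_sub_of_hasDerivAt (fun t _ => G2_deriv t)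
      ((((((continuous_const.mul Real.continuous_sin).sub continuous_const).pow 2).sub
        (continuous_const.mul ((continuous_const.mul Real.continuous_cos).pow 2))).mul
        Real.continuous_cos).intervalIntegrable _ _)]
  simp only [G1, G2, Real.sin_pi_div_three, Real.cos_pi_div_three, Real.sin_pi_div_two,
    Real.cos_pi_div_two, Real.sin_zero, Real.cos_zero]
  ring
lemma w0_value : w0 hReul hReul'' = 1 := by
  have habs : (fun t => |hReul t + hReul'' t|) = fun _ => (1:ℝ) := by
    funext t
    by_cases h : t ≤ π/3
    · rw [show hReul t + hReul'' t = 1 by simp [hReul, hReul'', h]]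
      exact abs_one
    · rw [show hReul t + hReul'' t = -1 by simp [hReul, hReul'', h]; ring]
      simp
  rw [w0, habs]
  refine essSup_const _ ?_
  intro hc
  rw [Measure.restrict_eq_zero] at hc
  simp only [Real.volume_Ioo] at hc
  rw [ENNReal.ofReal_eq_zero] at hc
  linarith [Real.pi_pos]

/-- The rotated Reuleaux triangle function `h_Reul` belongs to `E`, with
`F(h_Reul) = 1 − π/3`, `w₀(h_Reul) = 1`, and hence volume ratio
`1 + 3 F(h_Reul)/w₀(h_Reul)² = 4 − π`. -/
theorem reuleaux_value :
    MemE hReul hReul' ∧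
    (∀ᵐ t ∂(volume.restrict (Ioo (0:ℝ) (π/2))), HasDerivAt hReul' (hReul'' t) t) ∧
    Ffun hReul hReul' = 1 - π/3 ∧
    w0 hReul hReul'' = 1 ∧
    1 + 3 * Ffun hReul hReul' / (w0 hReul hReul'') ^ 2 = 4 - π := by
  refine ⟨⟨fun t _ => (hReul_hasDerivAt t).hasDerivWithinAt, ⟨2, hReul'_lipschitz⟩, ?_, ?_⟩,
    ?_, Ffun_value, w0_value, ?_⟩
  · have h03 : (0:ℝ) ≤ π/3 := by positivity
    simp [hReul, h03]
  · simp [hReul'', hReul', not_le.mpr pi3_lt_pi2, Real.cos_pi_div_two]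
  · have hne : ∀ᵐ t ∂(volume.restrict (Ioo (0:ℝ) (π/2))), t ≠ π/3 := by
      refine ae_restrict_of_ae ?_
      rw [ae_iff]
      simp only [ne_eq, not_not, setOf_eq_eq_singleton]
      exact measure_singleton _
    exact hne.mono fun t ht => hReul'_hasDerivAt ht
  · rw [Ffun_value, w0_value]
    ring_nf
end

section
/- Let x, y, z be real numbers with 0 < z < y < x and x + y ≤ 2. Then (z − x) arccos((x + z)/2) + (x − y) arccos((x + y)/2) + (y − z) arccos((y + z)/2) < 0. -/
open Real

lemma arccos_strictConcave : StrictConcaveOn ℝ (Set.Icc (0:ℝ) 1) Real.arccos := by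
  have hanti : StrictAntiOn (deriv Real.arccos) (interior (Set.Icc (0:ℝ) 1)) := by
    rw [interior_Icc]
    intro a ha b hb hab
    rw [Real.deriv_arccos]
    dsimp only
    have ha0 := ha.1; have ha1 := ha.2; have hb0 := hb.1; have hb1 := hb.2
    have h1 : (0:ℝ) < 1 - b ^ 2 := by nlinarith
    have h2 : 1 - b ^ 2 < 1 - a ^ 2 := by nlinarith
    have hs : Real.sqrt (1 - b ^ 2) < Real.sqrt (1 - a ^ 2) :=
      Real.sqrt_lt_sqrt h1.le h2
    have hsb : (0:ℝ) < Real.sqrt (1 - b ^ 2) := Real.sqrt_pos.mpr h1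
    have := one_div_lt_one_div_of_lt hsb hs
    linarith
  exact hanti.strictConcaveOn_of_deriv (convex_Icc 0 1) Real.continuous_arccos.continuousOn

/-- The key inequality of the case `z < y < x`: merging three successive
discontinuities into one strictly decreases the functional `F`. -/
theorem merging_inequality (x y z : ℝ) (hz : 0 < z) (hzy : z < y) (hyx : y < x)
    (hxy : x + y ≤ 2) :
    (z - x) * Real.arccos ((x + z) / 2) + (x - y) * Real.arccos ((x + y) / 2)
      + (y - z) * Real.arccos ((y + z) / 2) < 0 := by
  have hxz : z < x := hzy.trans hyx
  have hd : (0:ℝ) < x - z := by linarith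
  have hlam0 : 0 < (y - z) / (x - z) := div_pos (by linarith) hd
  have hmu0 : 0 < (x - y) / (x - z) := div_pos (by linarith) hd
  have hsum : (y - z) / (x - z) + (x - y) / (x - z) = 1 := by field_simp; ring
  have hmema : (y + z) / 2 ∈ Set.Icc (0:ℝ) 1 := ⟨by linarith, by linarith⟩
  have hmemc : (x + y) / 2 ∈ Set.Icc (0:ℝ) 1 := ⟨by linarith, by linarith⟩
  have hac : (y + z) / 2 ≠ (x + y) / 2 := by intro h; nlinarith [h]
  have hkey := arccos_strictConcave.2 hmema hmemc hac hlam0 hmu0 hsum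
  have hcomb : ((y - z) / (x - z)) • ((y + z) / 2) + ((x - y) / (x - z)) • ((x + y) / 2)
      = (x + z) / 2 := by
    simp only [smul_eq_mul]
    field_simp
    ring
  rw [hcomb] at hkey
  simp only [smul_eq_mul] at hkey
  have h := mul_lt_mul_of_pos_left hkey hd
  have e : (x - z) * ((y - z) / (x - z) * Real.arccos ((y + z) / 2)
        + (x - y) / (x - z) * Real.arccos ((x + y) / 2))
      = (y - z) * Real.arccos ((y + z) / 2) + (x - y) * Real.arccos ((x + y) / 2) := by
    field_simp
  rw [e] at h
  linarith
end

section
/- Let x, y, z be real numbers with 0 ≤ z < x, 0 ≤ y, and x + y ≤ 2. Then arccos((x + y)/2) − arccos((y + z)/2) < −(x − z)/√(4 − (y + z)²). -/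
open Real

/-- Comparison inequality for `arccos`: for `0 ≤ z < x`, `0 ≤ y`, `x + y ≤ 2`,
`arccos((x + y)/2) − arccos((y + z)/2) < −(x − z)/√(4 − (y + z)²)`. -/
theorem arccos_comparison (x y z : ℝ) (hz : 0 ≤ z) (hzx : z < x) (hy : 0 ≤ y)
    (hxy : x + y ≤ 2) :
    Real.arccos ((x + y) / 2) - Real.arccos ((y + z) / 2)
      < -((x - z) / Real.sqrt (4 - (y + z) ^ 2)) := by
  set a : ℝ := (y + z) / 2 with ha
  set b : ℝ := (x + y) / 2 with hb
  have hab : a < b := by rw [ha, hb]; linarith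
  have ha0 : 0 ≤ a := by rw [ha]; linarith
  have hb1 : b ≤ 1 := by rw [hb]; linarith
  obtain ⟨c, hc, hderiv⟩ := exists_hasDerivAt_eq_slope Real.arccos
    (fun t => -(1 / Real.sqrt (1 - t ^ 2))) hab
    Real.continuous_arccos.continuousOn
    (fun t ht => Real.hasDerivAt_arccos (by nlinarith [ht.1]) (by nlinarith [ht.2]))
  have hca : a < c := hc.1
  have hcb : c < b := hc.2
  have hc1 : c < 1 := lt_of_lt_of_le hcb hb1
  have h1c : (0:ℝ) < 1 - c ^ 2 := by nlinarith
  have h1a : (0:ℝ) < 1 - a ^ 2 := by nlinarith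
  have hlt : 1 - c ^ 2 < 1 - a ^ 2 := by nlinarith
  have hsc : (0:ℝ) < Real.sqrt (1 - c ^ 2) := Real.sqrt_pos.mpr h1c
  have hsa : (0:ℝ) < Real.sqrt (1 - a ^ 2) := Real.sqrt_pos.mpr h1a
  have hslt : Real.sqrt (1 - c ^ 2) < Real.sqrt (1 - a ^ 2) :=
    Real.sqrt_lt_sqrt h1c.le hlt
  have hba : (0:ℝ) < b - a := sub_pos.mpr hab
  have key : Real.arccos b - Real.arccos a = -((b - a) / Real.sqrt (1 - c ^ 2)) := by
    have := hderiv
    field_simp at this ⊢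
    nlinarith [this]
  rw [key]
  have hs4 : Real.sqrt (4 - (y + z) ^ 2) = 2 * Real.sqrt (1 - a ^ 2) := by
    rw [show (4 : ℝ) - (y + z) ^ 2 = 2 ^ 2 * (1 - a ^ 2) by rw [ha]; ring]
    rw [Real.sqrt_mul (by positivity), Real.sqrt_sq (by norm_num)]
  rw [hs4]
  have hxz : x - z = 2 * (b - a) := by rw [ha, hb]; ring
  rw [hxz]
  rw [show 2 * (b - a) / (2 * Real.sqrt (1 - a ^ 2)) = (b - a) / Real.sqrt (1 - a ^ 2) by
    rw [mul_div_mul_left _ _ (by norm_num : (2:ℝ) ≠ 0)]]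
  have : (b - a) / Real.sqrt (1 - a ^ 2) < (b - a) / Real.sqrt (1 - c ^ 2) :=
    div_lt_div_of_pos_left hba hsc hslt
  linarith
end

section
/- Let x, y, z be real numbers with 0 < z < x ≤ y and x + y < 2. Then arccos((x + y)/2) − arccos((y + z)/2) + (x − y)/√(4 − (x + y)²) + (y − z)/√(4 − (y + z)²) < 0. -/
open Real

private lemma hasDerivAt_aux (y u : ℝ) (h1 : -1 < u) (h2 : u < 1) :
    HasDerivAt (fun u => Real.arccos u + (u - y) / Real.sqrt (1 - u ^ 2))
      (u * (u - y) / Real.sqrt (1 - u ^ 2) ^ 3) u := by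
  have hu2 : 0 < 1 - u ^ 2 := by nlinarith
  have hs : 0 < Real.sqrt (1 - u ^ 2) := Real.sqrt_pos.2 hu2
  have hsq : Real.sqrt (1 - u ^ 2) ^ 2 = 1 - u ^ 2 := Real.sq_sqrt hu2.le
  have h1' : HasDerivAt (fun u : ℝ => 1 - u ^ 2) (-(2 * u)) u := by
    simpa using ((hasDerivAt_pow 2 u).const_sub 1)
  have hsqrt : HasDerivAt (fun u : ℝ => Real.sqrt (1 - u ^ 2))
      (1 / (2 * Real.sqrt (1 - u ^ 2)) * (-(2 * u))) u :=
    (Real.hasDerivAt_sqrt hu2.ne').comp u h1'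
  have hdiv : HasDerivAt (fun u : ℝ => (u - y) / Real.sqrt (1 - u ^ 2))
      ((1 * Real.sqrt (1 - u ^ 2) - (u - y) * (1 / (2 * Real.sqrt (1 - u ^ 2)) * (-(2 * u)))) /
        Real.sqrt (1 - u ^ 2) ^ 2) u :=
    ((hasDerivAt_id u).sub_const y).div hsqrt hs.ne'
  have harccos : HasDerivAt Real.arccos (-(1 / Real.sqrt (1 - u ^ 2))) u :=
    Real.hasDerivAt_arccos (by linarith) (by linarith)
  refine (harccos.add hdiv).congr_deriv ?_
  field_simp
  ring

/-- The case `x ≤ y`: the derivative `∂F/∂ε` of the functional `F` under the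
deformation `y ↦ y + ε` is strictly negative. -/
theorem deformation_derivative_neg (x y z : ℝ) (hz : 0 < z) (hzx : z < x)
    (hxy : x ≤ y) (hsum : x + y < 2) :
    Real.arccos ((x + y) / 2) - Real.arccos ((y + z) / 2)
      + (x - y) / Real.sqrt (4 - (x + y) ^ 2)
      + (y - z) / Real.sqrt (4 - (y + z) ^ 2) < 0 := by
  set a := (x + y) / 2 with ha
  set b := (y + z) / 2 with hb
  have hb0 : 0 < b := by simp only [hb]; linarith
  have hba : b < a := by simp only [ha, hb]; linarith
  have ha1 : a < 1 := by simp only [ha]; linarith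
  have hay : a ≤ y := by simp only [ha]; linarith
  set f : ℝ → ℝ := fun u => Real.arccos u + (u - y) / Real.sqrt (1 - u ^ 2) with hf
  have hderiv : ∀ u ∈ Set.Icc b a, HasDerivAt f (u * (u - y) / Real.sqrt (1 - u ^ 2) ^ 3) u := by
    intro u hu
    exact hasDerivAt_aux y u (by linarith [hu.1]) (by linarith [hu.2])
  have hanti : StrictAntiOn f (Set.Icc b a) := by
    apply strictAntiOn_of_deriv_neg (convex_Icc b a)
    · exact fun u hu => (hderiv u hu).continuousAt.continuousWithinAt
    · intro u hu
      rw [interior_Icc] at hu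
      rw [(hderiv u ⟨hu.1.le, hu.2.le⟩).deriv]
      have hu1 : u < 1 := lt_trans hu.2 ha1
      have hs : 0 < Real.sqrt (1 - u ^ 2) := Real.sqrt_pos.2 (by nlinarith [hb0.trans hu.1])
      have h1 : u * (u - y) < 0 := mul_neg_of_pos_of_neg (hb0.trans hu.1) (by linarith [hu.2])
      exact div_neg_of_neg_of_pos h1 (by positivity)
  have hfab : f a < f b := hanti (Set.left_mem_Icc.2 hba.le) (Set.right_mem_Icc.2 hba.le) hba
  -- rewrite the goal in terms of f
  have h4 : Real.sqrt 4 = 2 := by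
    rw [show (4:ℝ) = 2 ^ 2 by norm_num, Real.sqrt_sq (by norm_num)]
  have ea : Real.sqrt (4 - (x + y) ^ 2) = 2 * Real.sqrt (1 - a ^ 2) := by
    rw [show 4 - (x + y) ^ 2 = 4 * (1 - a ^ 2) by simp only [ha]; ring,
      Real.sqrt_mul (by norm_num), h4]
  have eb : Real.sqrt (4 - (y + z) ^ 2) = 2 * Real.sqrt (1 - b ^ 2) := by
    rw [show 4 - (y + z) ^ 2 = 4 * (1 - b ^ 2) by simp only [hb]; ring,
      Real.sqrt_mul (by norm_num), h4]
  have hsa : 0 < Real.sqrt (1 - a ^ 2) := Real.sqrt_pos.2 (by nlinarith [hb0.trans hba])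
  have hsb : 0 < Real.sqrt (1 - b ^ 2) := Real.sqrt_pos.2 (by nlinarith [hba.trans ha1])
  have key : Real.arccos a - Real.arccos b
      + (x - y) / Real.sqrt (4 - (x + y) ^ 2)
      + (y - z) / Real.sqrt (4 - (y + z) ^ 2) = f a - f b := by
    simp only [hf, ea, eb]
    have hx : x - y = 2 * (a - y) := by simp only [ha]; ring
    have hz' : y - z = 2 * (y - b) := by simp only [hb]; ring
    rw [hx, hz']
    field_simp
    ring
  rw [key]
  linarith [hfab]
end

section
/- Let x, y, z be real numbers with 0 < y ≤ z < x, x + y < 2, and y + z < 2. Then arccos((x + y)/2) − arccos((y + z)/2) + (x − y)/√(4 − (x + y)²) + (y − z)/√(4 − (y + z)²) > 0. -/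
open Real

private lemma aux_mono (y a b : ℝ) (hy : 0 < y) (hyb : y ≤ b) (hba : b < a) (ha : a < 1) :
    Real.arccos a - Real.arccos b + (a - y) / Real.sqrt (1 - a ^ 2)
      - (b - y) / Real.sqrt (1 - b ^ 2) > 0 := by
  set g : ℝ → ℝ := fun t => Real.arccos t + (t - y) / Real.sqrt (1 - t ^ 2) with hg
  have hb0 : 0 < b := lt_of_lt_of_le hy hyb
  have key : StrictMonoOn g (Set.Icc b a) := by
    apply strictMonoOn_of_deriv_pos (convex_Icc b a)
    · apply ContinuousOn.add (Real.continuous_arccos.continuousOn)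
      apply ContinuousOn.div
      · fun_prop
      · fun_prop
      · intro t ht
        have h1 : 0 < 1 - t ^ 2 := by
          rcases ht with ⟨h2, h3⟩
          nlinarith
        positivity
    · intro t ht
      rw [interior_Icc] at ht
      obtain ⟨htb, hta⟩ := ht
      have ht0 : 0 < t := hb0.trans htb
      have ht1 : t < 1 := hta.trans ha
      have hu : 0 < 1 - t ^ 2 := by nlinarith
      have hs : 0 < Real.sqrt (1 - t ^ 2) := Real.sqrt_pos.mpr hu
      have hsq : Real.sqrt (1 - t ^ 2) ^ 2 = 1 - t ^ 2 := Real.sq_sqrt hu.le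
      have h1 : HasDerivAt Real.arccos (-(1 / Real.sqrt (1 - t ^ 2))) t :=
        Real.hasDerivAt_arccos (by nlinarith) (by nlinarith)
      have h2 : HasDerivAt (fun t : ℝ => 1 - t ^ 2) (-(2 * t)) t := by
        simpa using ((hasDerivAt_pow 2 t).const_sub 1)
      have h3 : HasDerivAt (fun t : ℝ => Real.sqrt (1 - t ^ 2))
          (1 / (2 * Real.sqrt (1 - t ^ 2)) * -(2 * t)) t :=
        (Real.hasDerivAt_sqrt hu.ne').comp t h2
      have h4 : HasDerivAt (fun t : ℝ => t - y) 1 t := (hasDerivAt_id t).sub_const y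
      have h5 := h4.div h3 hs.ne'
      have h6 := h1.add h5
      rw [show deriv g t = _ from h6.deriv]
      have hty : 0 < t - y := by linarith
      rw [hsq]
      rw [neg_add_eq_sub, sub_pos, div_lt_div_iff₀ (by positivity) hu]
      have hkey : (1 * Real.sqrt (1 - t ^ 2)
            - (t - y) * (1 / (2 * Real.sqrt (1 - t ^ 2)) * -(2 * t))) * Real.sqrt (1 - t ^ 2)
          = (1 - t ^ 2) + t * (t - y) := by
        field_simp
        nlinarith [hsq]
      nlinarith [hkey, mul_pos ht0 hty]
  have := key (Set.left_mem_Icc.mpr hba.le) (Set.right_mem_Icc.mpr hba.le) hba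
  simp only [hg] at this
  linarith

/-- The case `y ≤ z`: the derivative `∂F/∂ε` of the functional `F` under the
deformation `y ↦ y + ε` is strictly positive. -/
theorem deformation_derivative_pos (x y z : ℝ) (hy : 0 < y) (hyz : y ≤ z)
    (hzx : z < x) (hsum₁ : x + y < 2) (hsum₂ : y + z < 2) :
    Real.arccos ((x + y) / 2) - Real.arccos ((y + z) / 2)
      + (x - y) / Real.sqrt (4 - (x + y) ^ 2)
      + (y - z) / Real.sqrt (4 - (y + z) ^ 2) > 0 := by
  set a : ℝ := (x + y) / 2 with hadef
  set b : ℝ := (y + z) / 2 with hbdef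
  have hyb : y ≤ b := by rw [hbdef]; linarith
  have hba : b < a := by rw [hadef, hbdef]; linarith
  have ha1 : a < 1 := by rw [hadef]; linarith
  have hb0 : 0 < b := lt_of_lt_of_le hy hyb
  have ha0 : 0 < a := hb0.trans hba
  have hua : 0 < 1 - a ^ 2 := by nlinarith
  have hub : 0 < 1 - b ^ 2 := by nlinarith
  have hsa : 0 < Real.sqrt (1 - a ^ 2) := Real.sqrt_pos.mpr hua
  have hsb : 0 < Real.sqrt (1 - b ^ 2) := Real.sqrt_pos.mpr hub
  have h4a : Real.sqrt (4 - (x + y) ^ 2) = 2 * Real.sqrt (1 - a ^ 2) := by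
    rw [show 4 - (x + y) ^ 2 = 2 ^ 2 * (1 - a ^ 2) by rw [hadef]; ring,
      Real.sqrt_mul (by positivity), Real.sqrt_sq (by norm_num)]
  have h4b : Real.sqrt (4 - (y + z) ^ 2) = 2 * Real.sqrt (1 - b ^ 2) := by
    rw [show 4 - (y + z) ^ 2 = 2 ^ 2 * (1 - b ^ 2) by rw [hbdef]; ring,
      Real.sqrt_mul (by positivity), Real.sqrt_sq (by norm_num)]
  have e1 : (x - y) / Real.sqrt (4 - (x + y) ^ 2) = (a - y) / Real.sqrt (1 - a ^ 2) := by
    rw [h4a, hadef]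
    field_simp
    ring
  have e2 : (y - z) / Real.sqrt (4 - (y + z) ^ 2) = -((b - y) / Real.sqrt (1 - b ^ 2)) := by
    rw [h4b, hbdef]
    field_simp
    ring
  rw [e1, e2]
  have := aux_mono y a b hy hyb hba ha1
  linarith
end
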